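/- arXiv:1106.0026 — 4 statements merged into one kernel-verified Lean document; each statement's English description precedes it below -/
import Mathlib

section
/- Let H be a Hilbert space and T a self-adjoint bounded linear operator on H. For every f ∈ H with Tⁿf ≠ 0 for all n, the limits lim_{n→∞} ⟨Tⁿ⁺¹f, Tⁿ⁺¹f⟩/⟨Tⁿf, Tⁿf⟩ and lim_{n→∞} ⟨Tⁿf, Tⁿf⟩^{1/n} both exist, are finite, and are equal. -/
open RealInnerProductSpace Filter

/-- For a self-adjoint bounded operator `T` on a real Hilbert space and `f` with `Tⁿ f ≠ 0`
for all `n`, the limits `lim ⟨Tⁿ⁺¹f,Tⁿ⁺¹f⟩/⟨Tⁿf,Tⁿf⟩` and `lim ⟨Tⁿf,Tⁿf⟩^(1/n)` both exist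
(as finite real numbers) and are equal. -/
theorem stmt1 {H : Type*} [NormedAddCommGroup H] [InnerProductSpace ℝ H] [CompleteSpace H]
    (T : H →L[ℝ] H) (hT : IsSelfAdjoint T) (f : H) (hf : ∀ n : ℕ, (T ^ n) f ≠ 0) :
    ∃ L : ℝ,
      Tendsto (fun n : ℕ => ⟪(T ^ (n + 1)) f, (T ^ (n + 1)) f⟫ / ⟪(T ^ n) f, (T ^ n) f⟫)
        atTop (nhds L) ∧
      Tendsto (fun n : ℕ => (⟪(T ^ n) f, (T ^ n) f⟫ : ℝ) ^ ((n : ℝ)⁻¹)) atTop (nhds L) := by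
  set a : ℕ → ℝ := fun n => ⟪(T ^ n) f, (T ^ n) f⟫ with ha
  have ha_pos : ∀ n, 0 < a n := by
    intro n
    have : a n = ‖(T ^ n) f‖ ^ 2 := real_inner_self_eq_norm_sq _
    rw [this]
    exact pow_pos (norm_pos_iff.2 (hf n)) 2
  set r : ℕ → ℝ := fun n => a (n + 1) / a n with hr
  have hr_pos : ∀ n, 0 < r n := fun n => div_pos (ha_pos _) (ha_pos _)
  have hsucc : ∀ n, (T ^ (n + 1)) f = T ((T ^ n) f) := by
    intro n
    rw [pow_succ']; rfl
  -- key inequality a(n+1)^2 ≤ a n * a (n+2)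
  have hkey : ∀ n, a (n + 1) * a (n + 1) ≤ a n * a (n + 2) := by
    intro n
    have h1 : a (n + 1) = ⟪(T ^ n) f, (T ^ (n + 2)) f⟫ := by
      have := hT.isSymmetric
      calc a (n + 1) = ⟪T ((T ^ n) f), T ((T ^ n) f)⟫ := by simp only [ha, hsucc]
        _ = ⟪(T ^ n) f, T (T ((T ^ n) f))⟫ := this _ _
        _ = ⟪(T ^ n) f, (T ^ (n + 2)) f⟫ := by rw [hsucc, hsucc]
    calc a (n + 1) * a (n + 1)
        = ⟪(T ^ n) f, (T ^ (n + 2)) f⟫ * ⟪(T ^ n) f, (T ^ (n + 2)) f⟫ := by rw [h1]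
      _ ≤ ⟪(T ^ n) f, (T ^ n) f⟫ * ⟪(T ^ (n + 2)) f, (T ^ (n + 2)) f⟫ :=
          real_inner_mul_inner_self_le _ _
      _ = a n * a (n + 2) := rfl
  have hr_mono : Monotone r := by
    apply monotone_nat_of_le_succ
    intro n
    rw [hr, div_le_div_iff₀ (ha_pos n) (ha_pos (n + 1))]
    have := hkey n
    nlinarith [ha_pos n, ha_pos (n + 1), ha_pos (n + 2)]
  have hr_bdd : ∀ n, r n ≤ ‖T‖ ^ 2 := by
    intro n
    rw [hr, div_le_iff₀ (ha_pos n)]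
    have h1 : a (n + 1) = ‖T ((T ^ n) f)‖ ^ 2 := by
      simp only [ha, hsucc]; exact real_inner_self_eq_norm_sq _
    have h2 : a n = ‖(T ^ n) f‖ ^ 2 := real_inner_self_eq_norm_sq _
    have h3 : ‖T ((T ^ n) f)‖ ≤ ‖T‖ * ‖(T ^ n) f‖ := T.le_opNorm _
    have h4 : (0:ℝ) ≤ ‖T ((T ^ n) f)‖ := norm_nonneg _
    nlinarith [norm_nonneg ((T ^ n) f), norm_nonneg T]
  set L : ℝ := ⨆ n, r n with hL
  have hbdd : BddAbove (Set.range r) := ⟨‖T‖ ^ 2, by rintro x ⟨n, rfl⟩; exact hr_bdd n⟩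
  have hlim : Tendsto r atTop (nhds L) := tendsto_atTop_ciSup hr_mono hbdd
  have hL_pos : 0 < L := lt_of_lt_of_le (hr_pos 0) (le_ciSup hbdd 0)
  refine ⟨L, hlim, ?_⟩
  -- logs
  have hlog : Tendsto (fun n => Real.log (r n)) atTop (nhds (Real.log L)) :=
    ((Real.continuousAt_log hL_pos.ne').tendsto).comp hlim
  have hces := hlog.cesaro
  -- a n = a 0 * ∏ r i, so log (a n) = log (a 0) + ∑ log (r i)
  have hsum : ∀ n, Real.log (a n) = Real.log (a 0) + ∑ i ∈ Finset.range n, Real.log (r i) := by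
    intro n
    induction n with
    | zero => simp
    | succ n ih =>
      have : a (n + 1) = a n * r n := by
        rw [hr, mul_comm, div_mul_cancel₀ _ (ha_pos n).ne']
      rw [this, Real.log_mul (ha_pos n).ne' (hr_pos n).ne', ih, Finset.sum_range_succ]
      ring
  have hlogn : Tendsto (fun n : ℕ => (n : ℝ)⁻¹ * Real.log (a n)) atTop (nhds (Real.log L)) := by
    have h0 : Tendsto (fun n : ℕ => (n : ℝ)⁻¹ * Real.log (a 0)) atTop (nhds 0) := by
      simpa using ((tendsto_inv_atTop_nhds_zero_nat (𝕜 := ℝ)).mul_const (Real.log (a 0)))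
    have := h0.add hces
    rw [zero_add] at this
    refine this.congr fun n => ?_
    rw [hsum n]; ring
  have hexp := (Real.continuous_exp.tendsto _).comp hlogn
  rw [Real.exp_log hL_pos] at hexp
  refine hexp.congr fun n => ?_
  simp only [Function.comp]
  rw [Real.rpow_def_of_pos (ha_pos n), mul_comm]
end

section
/- Let d ≥ 2 and let Φ be a symmetric linear GDMS associated to the free group F_d, with contraction-ratio function c_Φ : F_d → (0,1) satisfying c_Φ(gh) = c_Φ(g)c_Φ(h) whenever the reduced word of gh is the concatenation of the reduced words of g and h, and c_Φ(g) = c_Φ(g⁻¹) for all g. Then for every non-trivial normal subgroup N of F_d, the Poincaré series of N at the half-exponent diverges: Σ_{h∈N} c_Φ(h)^{δ(F_d,Φ)/2} = ∞, where δ(F_d,Φ) is the exponent of convergence of the full group. -/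
open scoped BigOperators
set_option maxHeartbeats 1000000

/-- The weight of a free-group element with respect to symmetric contraction ratios
`r i` on the generators: the product of the ratios over the letters of the reduced word. -/
noncomputable def cWeight {d : ℕ} (r : Fin d → ℝ) (g : FreeGroup (Fin d)) : ℝ :=
  ((FreeGroup.toWord g).map (fun p => r p.1)).prod

/-- The exponent of convergence of a subgroup `H` with respect to the weight `cWeight r`. -/
noncomputable def expConv {d : ℕ} (r : Fin d → ℝ) (H : Subgroup (FreeGroup (Fin d))) : ℝ :=
  sInf {t : ℝ | 0 ≤ t ∧ Summable (fun h : H => cWeight r (h : FreeGroup (Fin d)) ^ t)}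

namespace Stmt6Aux

/-- The "no cancellation" relation between consecutive letters of a reduced word. -/
abbrev Rel {α : Type*} (x y : α × Bool) : Prop := ¬(x.1 = y.1 ∧ x.2 = !y.2)

lemma rel_iff {α : Type*} {x y : α × Bool} : Rel x y ↔ y ≠ (x.1, !x.2) := by
  constructor
  · rintro h rfl
    exact h ⟨rfl, by simp⟩
  · rintro h ⟨h1, h2⟩
    exact h (Prod.ext h1.symm (by simp [h2]))

lemma ne_inL_symm {α : Type*} {a b : α × Bool} (h : a ≠ (b.1, !b.2)) : b ≠ (a.1, !a.2) := by
  intro hEq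
  apply h
  rw [hEq]
  simp

lemma reduce_eq_self {α : Type*} [DecidableEq α] :
    ∀ {L : List (α × Bool)}, L.Chain' Rel → FreeGroup.reduce L = L := by
  intro L
  induction L with
  | nil => intro _; rfl
  | cons x L ih =>
    intro h
    rw [FreeGroup.reduce.cons, ih h.tail]
    cases L with
    | nil => rfl
    | cons y tl =>
      have hxy : Rel x y := (List.isChain_cons_cons.mp h).1
      simp only [Rel] at hxy
      simp [hxy]

lemma chain'_reduce {α : Type*} [DecidableEq α] (L : List (α × Bool)) :
    (FreeGroup.reduce L).Chain' Rel := by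
  induction L with
  | nil => exact List.isChain_nil
  | cons x L ih =>
    rw [FreeGroup.reduce.cons]
    rcases h : FreeGroup.reduce L with _ | ⟨y, tl⟩
    · exact List.isChain_singleton _
    · rw [h] at ih
      dsimp only
      by_cases hc : x.1 = y.1 ∧ x.2 = !y.2
      · rw [if_pos hc]
        exact ih.tail
      · rw [if_neg hc]
        exact List.isChain_cons_cons.mpr ⟨hc, ih⟩

lemma chain'_toWord {α : Type*} [DecidableEq α] (g : FreeGroup α) :
    g.toWord.Chain' Rel := by
  rw [← FreeGroup.reduce_toWord]
  exact chain'_reduce _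

lemma toWord_mk_self {α : Type*} [DecidableEq α] {L : List (α × Bool)} (h : L.Chain' Rel) :
    (FreeGroup.mk L).toWord = L := by
  rw [FreeGroup.toWord_mk, reduce_eq_self h]

lemma chain'_glue {α : Type*} {L1 L2 : List (α × Bool)} {a : α × Bool}
    (h1 : L1.Chain' Rel) (h2 : L2.Chain' Rel)
    (ha : ∀ x ∈ L1.getLast?, Rel x a) (hb : ∀ y ∈ L2.head?, Rel a y) :
    (L1 ++ a :: L2).Chain' Rel := by
  apply List.IsChain.append h1 (List.isChain_cons.mpr ⟨hb, h2⟩)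
  intro x hx y hy
  simp only [List.head?_cons, Option.mem_def, Option.some.injEq] at hy
  subst hy
  exact ha x hx

lemma head?_invRev {α : Type*} (u : List (α × Bool)) :
    (FreeGroup.invRev u).head? = u.getLast?.map (fun x => (x.1, !x.2)) := by
  rcases List.eq_nil_or_concat u with rfl | ⟨u', x, rfl⟩
  · simp [FreeGroup.invRev]
  · rw [List.concat_eq_append, FreeGroup.invRev, List.map_append, List.reverse_append]
    simp [List.getLast?_concat]

lemma chain'_big {α : Type*} [DecidableEq α] {u w : List (α × Bool)} {a : α × Bool}
    (hu : u.Chain' Rel) (hw : w.Chain' Rel) (hv : (FreeGroup.invRev u).Chain' Rel)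
    (hwne : w ≠ [])
    (ha1 : ∀ x ∈ u.getLast?, a ≠ (x.1, !x.2))
    (ha2 : ∀ x ∈ w.head?, a ≠ (x.1, !x.2))
    (ha3 : ∀ x ∈ w.getLast?, a ≠ x) :
    (u ++ a :: (w ++ (a.1, !a.2) :: FreeGroup.invRev u)).Chain' Rel := by
  apply chain'_glue hu
  · apply chain'_glue hw hv
    · intro x hx
      rw [rel_iff]
      intro hEq
      apply ha3 x hx
      have h1 := congrArg Prod.fst hEq
      have h2 := congrArg Prod.snd hEq
      simp only at h1 h2
      exact (Prod.ext h1.symm (Bool.not_inj h2.symm)).symm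
    · intro y hy
      rw [head?_invRev, Option.mem_map] at hy
      obtain ⟨x, hx, rfl⟩ := hy
      rw [rel_iff]
      simp only [Bool.not_not, Prod.mk.eta]
      intro hEq
      exact ha1 x hx hEq.symm
  · intro x hx
    rw [rel_iff]
    exact ha1 x hx
  · intro y hy
    obtain ⟨b, w', rfl⟩ := List.exists_cons_of_ne_nil hwne
    simp only [List.cons_append, List.head?_cons, Option.mem_def, Option.some.injEq] at hy
    subst hy
    rw [rel_iff]
    exact ne_inL_symm (ha2 b (by simp))

lemma weight_prod_pos {d : ℕ} {r : Fin d → ℝ} (hr : ∀ i, 0 < r i) (L : List (Fin d × Bool)) :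
    0 < (L.map (fun p => r p.1)).prod := by
  induction L with
  | nil => simp
  | cons x L ih => simpa using mul_pos (hr x.1) ih

lemma cWeight_pos {d : ℕ} {r : Fin d → ℝ} (hr : ∀ i, 0 < r i) (g : FreeGroup (Fin d)) :
    0 < cWeight r g := weight_prod_pos hr _

lemma pow_le_weight_prod {d : ℕ} {r : Fin d → ℝ} {ρ : ℝ} (h0 : 0 ≤ ρ) (hle : ∀ i, ρ ≤ r i) :
    ∀ L : List (Fin d × Bool), ρ ^ L.length ≤ (L.map (fun p => r p.1)).prod := by
  intro L
  induction L with
  | nil => simp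
  | cons x L ih =>
    simp only [List.map_cons, List.prod_cons, List.length_cons]
    rw [pow_succ']
    exact mul_le_mul (hle x.1) ih (pow_nonneg h0 _) (h0.trans (hle x.1))

lemma rhopow_le_cWeight {d : ℕ} {r : Fin d → ℝ} {ρ : ℝ} (h0 : 0 ≤ ρ) (hle : ∀ i, ρ ≤ r i)
    (g : FreeGroup (Fin d)) : ρ ^ g.toWord.length ≤ cWeight r g :=
  pow_le_weight_prod h0 hle g.toWord

lemma sphere_finite (d n : ℕ) : {g : FreeGroup (Fin d) | g.toWord.length = n}.Finite := by
  have h : {g : FreeGroup (Fin d) | g.toWord.length = n}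
      = FreeGroup.toWord ⁻¹' {L : List (Fin d × Bool) | L.length = n} := rfl
  rw [h]
  exact (List.finite_length_eq _ n).preimage (FreeGroup.toWord_injective.injOn)

noncomputable def sphere (d n : ℕ) : Finset (FreeGroup (Fin d)) := (sphere_finite d n).toFinset

lemma mem_sphere {d n : ℕ} {g : FreeGroup (Fin d)} : g ∈ sphere d n ↔ g.toWord.length = n := by
  simp [sphere]

/-- The partition function: sum of weights to the power `t` over the sphere of radius `n`. -/
noncomputable def Z {d : ℕ} (r : Fin d → ℝ) (t : ℝ) (n : ℕ) : ℝ :=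
  ∑ g ∈ sphere d n, cWeight r g ^ t

lemma Z_nonneg {d : ℕ} {r : Fin d → ℝ} (hr : ∀ i, 0 < r i) (t : ℝ) (n : ℕ) : 0 ≤ Z r t n :=
  Finset.sum_nonneg fun g _ => Real.rpow_nonneg (cWeight_pos hr g).le t

lemma Z_submul {d : ℕ} {r : Fin d → ℝ} (hr : ∀ i, 0 < r i) (t : ℝ) (m n : ℕ) :
    Z r t (m + n) ≤ Z r t m * Z r t n := by
  classical
  have key : ∀ g ∈ sphere d (m + n),
      FreeGroup.mk (g.toWord.take m) ∈ sphere d m ∧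
      FreeGroup.mk (g.toWord.drop m) ∈ sphere d n ∧
      cWeight r g ^ t
        = cWeight r (FreeGroup.mk (g.toWord.take m)) ^ t
          * cWeight r (FreeGroup.mk (g.toWord.drop m)) ^ t ∧
      g = FreeGroup.mk (g.toWord.take m) * FreeGroup.mk (g.toWord.drop m) := by
    intro g hg
    rw [mem_sphere] at hg
    have hc := chain'_toWord g
    have h1 : (g.toWord.take m).Chain' Rel := hc.prefix (List.take_prefix m _)
    have h2 : (g.toWord.drop m).Chain' Rel := hc.suffix (List.drop_suffix m _)
    have ht1 : (FreeGroup.mk (g.toWord.take m)).toWord = g.toWord.take m := toWord_mk_self h1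
    have ht2 : (FreeGroup.mk (g.toWord.drop m)).toWord = g.toWord.drop m := toWord_mk_self h2
    have hsplit : cWeight r g
        = cWeight r (FreeGroup.mk (g.toWord.take m)) * cWeight r (FreeGroup.mk (g.toWord.drop m)) := by
      unfold cWeight
      rw [ht1, ht2, ← List.prod_append, ← List.map_append, List.take_append_drop]
    refine ⟨?_, ?_, ?_, ?_⟩
    · rw [mem_sphere, ht1, List.length_take, hg]; omega
    · rw [mem_sphere, ht2, List.length_drop, hg]; omega
    · rw [hsplit, Real.mul_rpow (cWeight_pos hr _).le (cWeight_pos hr _).le]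
    · conv_lhs => rw [← FreeGroup.mk_toWord (x := g)]
      rw [FreeGroup.mul_mk, List.take_append_drop]
  have hinj : ∀ g ∈ sphere d (m + n), ∀ g' ∈ sphere d (m + n),
      (fun g : FreeGroup (Fin d) =>
        (FreeGroup.mk (g.toWord.take m), FreeGroup.mk (g.toWord.drop m))) g
      = (fun g : FreeGroup (Fin d) =>
        (FreeGroup.mk (g.toWord.take m), FreeGroup.mk (g.toWord.drop m))) g' → g = g' := by
    intro g hg g' hg' h
    simp only [Prod.mk.injEq] at h
    rw [(key g hg).2.2.2, (key g' hg').2.2.2, h.1, h.2]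
  calc Z r t (m + n)
      = ∑ g ∈ sphere d (m + n),
          (cWeight r (FreeGroup.mk (g.toWord.take m)) ^ t
            * cWeight r (FreeGroup.mk (g.toWord.drop m)) ^ t) :=
        Finset.sum_congr rfl (fun g hg => (key g hg).2.2.1)
    _ = ∑ p ∈ (sphere d (m + n)).image (fun g : FreeGroup (Fin d) =>
          (FreeGroup.mk (g.toWord.take m), FreeGroup.mk (g.toWord.drop m))),
          cWeight r p.1 ^ t * cWeight r p.2 ^ t := (Finset.sum_image (f := fun p : FreeGroup (Fin d) × FreeGroup (Fin d) => cWeight r p.1 ^ t * cWeight r p.2 ^ t) hinj).symm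
    _ ≤ ∑ p ∈ sphere d m ×ˢ sphere d n, cWeight r p.1 ^ t * cWeight r p.2 ^ t := by
        apply Finset.sum_le_sum_of_subset_of_nonneg
        · intro p hp
          obtain ⟨g, hg, rfl⟩ := Finset.mem_image.mp hp
          exact Finset.mem_product.mpr ⟨(key g hg).1, (key g hg).2.1⟩
        · intro p _ _
          exact mul_nonneg (Real.rpow_nonneg (cWeight_pos hr _).le _)
            (Real.rpow_nonneg (cWeight_pos hr _).le _)
    _ = Z r t m * Z r t n := by
        rw [Z, Z, Finset.sum_mul_sum, Finset.sum_product]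

end Stmt6Aux

open Stmt6Aux in
/-- For a symmetric linear GDMS associated to `F_d` (`d ≥ 2`) with contraction ratios
`r i ∈ (0,1)` and for every non-trivial normal subgroup `N` of `F_d`, the Poincaré series of
`N` diverges at the half-exponent `δ(F_d, Φ)/2`. -/
theorem stmt6 {d : ℕ} (hd : 2 ≤ d) (r : Fin d → ℝ) (hr : ∀ i, 0 < r i ∧ r i < 1)
    (N : Subgroup (FreeGroup (Fin d))) [N.Normal] (hN : N ≠ ⊥) :
    ¬ Summable (fun h : N =>
        cWeight r (h : FreeGroup (Fin d)) ^ (expConv r (⊤ : Subgroup (FreeGroup (Fin d))) / 2)) := by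
  classical
  intro hSum
  have hNormal : N.Normal := inferInstance
  have hrpos : ∀ i, 0 < r i := fun i => (hr i).1
  set S : Set ℝ := {t : ℝ | 0 ≤ t ∧ Summable (fun h : (⊤ : Subgroup (FreeGroup (Fin d))) =>
      cWeight r (h : FreeGroup (Fin d)) ^ t)} with hSdef
  set δ : ℝ := expConv r (⊤ : Subgroup (FreeGroup (Fin d))) with hδdef
  have hδS : δ = sInf S := rfl
  have hδ0 : 0 ≤ δ := by
    rw [hδS]
    rcases Set.eq_empty_or_nonempty S with hS | hS
    · rw [hS, Real.sInf_empty]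
    · exact le_csInf hS fun x hx => hx.1
  -- minimal ratio
  obtain ⟨j, -, hj⟩ := Finset.exists_min_image (Finset.univ : Finset (Fin d)) r
    ⟨⟨0, by omega⟩, Finset.mem_univ _⟩
  set ρ : ℝ := r j with hρdef
  have hρ0 : 0 < ρ := hrpos j
  have hρ1 : ρ < 1 := (hr j).2
  have hρle : ∀ i, ρ ≤ r i := fun i => hj i (Finset.mem_univ i)
  -- a nontrivial element of N
  obtain ⟨n₀', hn₀'⟩ := Subgroup.ne_bot_iff_exists_ne_one.mp hN
  set n₀ : FreeGroup (Fin d) := (n₀' : FreeGroup (Fin d)) with hn₀def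
  have hn₀N : n₀ ∈ N := n₀'.2
  have hn₀1 : n₀ ≠ 1 := fun h => hn₀' (Subtype.ext h)
  have hw₀ne : n₀.toWord ≠ [] := fun h => hn₀1 (FreeGroup.toWord_eq_nil_iff.mp h)
  have hw₀ch : n₀.toWord.Chain' Rel := chain'_toWord n₀
  -- choose, for each g, a connecting letter avoiding all cancellations
  have hcard : ∀ x y z' : Fin d × Bool, ∃ a : Fin d × Bool, a ≠ x ∧ a ≠ y ∧ a ≠ z' := by
    intro x y z'
    by_contra hcon
    push_neg at hcon
    have hsub : (Finset.univ : Finset (Fin d × Bool)) ⊆ {x, y, z'} := by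
      intro a _
      simp only [Finset.mem_insert, Finset.mem_singleton]
      by_contra ha
      push_neg at ha
      exact ha.2.2 (hcon a ha.1 ha.2.1)
    have h1 := Finset.card_le_card hsub
    have h2 : ({x, y, z'} : Finset (Fin d × Bool)).card ≤ 3 := by
      apply le_trans (Finset.card_insert_le _ _)
      have h3 := Finset.card_insert_le y ({z'} : Finset (Fin d × Bool))
      simp only [Finset.card_singleton] at h3
      omega
    rw [Finset.card_univ, Fintype.card_prod, Fintype.card_fin, Fintype.card_bool] at h1
    omega
  have hz0 : Fin d × Bool := (⟨0, by omega⟩, true)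
  have hchoice : ∀ g : FreeGroup (Fin d), ∃ a : Fin d × Bool,
      (∀ x ∈ g.toWord.getLast?, a ≠ (x.1, !x.2)) ∧
      (∀ x ∈ n₀.toWord.head?, a ≠ (x.1, !x.2)) ∧
      (∀ x ∈ n₀.toWord.getLast?, a ≠ x) := by
    intro g
    obtain ⟨a, h1, h2, h3⟩ := hcard
      ((g.toWord.getLastD hz0).1, !(g.toWord.getLastD hz0).2)
      ((n₀.toWord.headD hz0).1, !(n₀.toWord.headD hz0).2)
      (n₀.toWord.getLastD hz0)
    refine ⟨a, ?_, ?_, ?_⟩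
    · intro x hx
      have hx' : g.toWord.getLast? = some x := Option.mem_def.mp hx
      rwa [List.getLastD_eq_getLast?, hx', Option.getD_some] at h1
    · intro x hx
      have hx' : n₀.toWord.head? = some x := Option.mem_def.mp hx
      rwa [List.headD_eq_head?, hx', Option.getD_some] at h2
    · intro x hx
      have hx' : n₀.toWord.getLast? = some x := Option.mem_def.mp hx
      rwa [List.getLastD_eq_getLast?, hx', Option.getD_some] at h3
  choose A hA1 hA2 hA3 using hchoice
  -- the conjugating construction
  set conj : FreeGroup (Fin d) → FreeGroup (Fin d) :=
    fun g => (g * FreeGroup.mk [A g]) * n₀ * (g * FreeGroup.mk [A g])⁻¹ with hconjdef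
  have hmem : ∀ g, conj g ∈ N := by
    intro g
    exact hNormal.conj_mem n₀ hn₀N (g * FreeGroup.mk [A g])
  have hBig : ∀ g : FreeGroup (Fin d),
      (conj g).toWord
        = g.toWord ++ A g :: (n₀.toWord ++ ((A g).1, !(A g).2) :: FreeGroup.invRev g.toWord) := by
    intro g
    have hch : (g.toWord ++ A g :: (n₀.toWord
        ++ ((A g).1, !(A g).2) :: FreeGroup.invRev g.toWord)).Chain' Rel := by
      apply chain'_big (chain'_toWord g) hw₀ch ?_ hw₀ne (hA1 g) (hA2 g) (hA3 g)
      rw [← FreeGroup.toWord_inv]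
      exact chain'_toWord _
    have hconj : conj g = FreeGroup.mk (g.toWord ++ A g :: (n₀.toWord
        ++ ((A g).1, !(A g).2) :: FreeGroup.invRev g.toWord)) := by
      have h1 : g * FreeGroup.mk [A g] = FreeGroup.mk (g.toWord ++ [A g]) := by
        rw [← FreeGroup.mul_mk, FreeGroup.mk_toWord]
      have h2 : n₀ = FreeGroup.mk n₀.toWord := (FreeGroup.mk_toWord).symm
      rw [hconjdef]
      simp only
      rw [h1]
      conv_lhs => rw [h2]
      rw [FreeGroup.inv_mk, FreeGroup.mul_mk, FreeGroup.mul_mk]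
      congr 1
      rw [show FreeGroup.invRev (g.toWord ++ [A g])
          = ((A g).1, !(A g).2) :: FreeGroup.invRev g.toWord from by
        simp [FreeGroup.invRev]]
      simp
    rw [hconj, toWord_mk_self hch]
  -- injectivity of the construction
  have hinj : Function.Injective (fun g : FreeGroup (Fin d) => (⟨conj g, hmem g⟩ : N)) := by
    intro g g' h
    simp only [Subtype.mk.injEq] at h
    have h2 := congrArg FreeGroup.toWord h
    rw [hBig g, hBig g'] at h2
    have hlen := congrArg List.length h2
    simp only [List.length_append, List.length_cons, FreeGroup.invRev_length] at hlen
    have hll : g.toWord.length = g'.toWord.length := by omega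
    exact FreeGroup.toWord_injective (List.append_inj h2 hll).1
  -- weight of the conjugated element
  have hwt : ∀ g : FreeGroup (Fin d),
      cWeight r (conj g)
        = r (A g).1 * (r (A g).1 * (cWeight r n₀ * (cWeight r g * cWeight r g))) := by
    intro g
    unfold cWeight
    rw [hBig g]
    rw [List.map_append, List.prod_append, List.map_cons, List.prod_cons,
      List.map_append, List.prod_append, List.map_cons, List.prod_cons]
    rw [show (FreeGroup.invRev g.toWord).map (fun p => r p.1)
        = (g.toWord.map (fun p => r p.1)).reverse from by
      simp [FreeGroup.invRev, List.map_reverse, List.map_map, Function.comp]]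
    rw [List.prod_reverse]
    ring
  -- transfer summability from N to F_d
  have hSumComp0 := hSum.comp_injective hinj
  have hSumComp : Summable (fun g : FreeGroup (Fin d) => cWeight r (conj g) ^ (δ / 2)) := by
    exact hSumComp0
  set K : ℝ := ρ * (ρ * cWeight r n₀) with hKdef
  have hK0 : 0 < K := mul_pos hρ0 (mul_pos hρ0 (cWeight_pos hrpos n₀))
  have hbound : ∀ g : FreeGroup (Fin d),
      cWeight r g ^ δ ≤ K ^ (-(δ / 2)) * cWeight r (conj g) ^ (δ / 2) := by
    intro g
    have hcg : 0 < cWeight r g := cWeight_pos hrpos g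
    have hX : (0:ℝ) ≤ cWeight r n₀ * (cWeight r g * cWeight r g) :=
      mul_nonneg (cWeight_pos hrpos n₀).le (mul_nonneg hcg.le hcg.le)
    have h2 : K * (cWeight r g * cWeight r g) ≤ cWeight r (conj g) := by
      rw [hwt g]
      have inner : ρ * (cWeight r n₀ * (cWeight r g * cWeight r g))
          ≤ r (A g).1 * (cWeight r n₀ * (cWeight r g * cWeight r g)) :=
        mul_le_mul_of_nonneg_right (hρle (A g).1) hX
      calc K * (cWeight r g * cWeight r g)
          = ρ * (ρ * (cWeight r n₀ * (cWeight r g * cWeight r g))) := by rw [hKdef]; ring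
        _ ≤ r (A g).1 * (r (A g).1 * (cWeight r n₀ * (cWeight r g * cWeight r g))) :=
          mul_le_mul (hρle (A g).1) inner (mul_nonneg hρ0.le hX) (hρ0.le.trans (hρle (A g).1))
    have h3 : (K * (cWeight r g * cWeight r g)) ^ (δ / 2) ≤ cWeight r (conj g) ^ (δ / 2) :=
      Real.rpow_le_rpow (le_of_lt (mul_pos hK0 (mul_pos hcg hcg))) h2 (by linarith)
    rw [Real.mul_rpow hK0.le (mul_nonneg hcg.le hcg.le),
      Real.mul_rpow hcg.le hcg.le, ← Real.rpow_add hcg] at h3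
    have hδδ : δ / 2 + δ / 2 = δ := by ring
    rw [hδδ] at h3
    calc cWeight r g ^ δ
        = K ^ (-(δ / 2)) * (K ^ (δ / 2) * cWeight r g ^ δ) := by
          rw [← mul_assoc, ← Real.rpow_add hK0, neg_add_cancel, Real.rpow_zero, one_mul]
      _ ≤ K ^ (-(δ / 2)) * cWeight r (conj g) ^ (δ / 2) :=
          mul_le_mul_of_nonneg_left h3 (Real.rpow_nonneg hK0.le _)
  have hF : Summable (fun g : FreeGroup (Fin d) => cWeight r g ^ δ) :=
    Summable.of_nonneg_of_le (fun g => Real.rpow_nonneg (cWeight_pos hrpos g).le δ) hbound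
      (hSumComp.mul_left _)
  -- Step 2: derive a contradiction from summability of the full series at δ
  rcases eq_or_lt_of_le hδ0 with hδe | hδpos
  · -- δ = 0 : the constant series over the infinite group diverges
    rw [← hδe] at hF
    simp only [Real.rpow_zero] at hF
    have hne : Nonempty (Fin d) := ⟨⟨0, by omega⟩⟩
    have hinf : Infinite (FreeGroup (Fin d)) := inferInstance
    have h1 : Filter.Tendsto (fun _ : FreeGroup (Fin d) => (1:ℝ)) Filter.cofinite (nhds 0) :=
      hF.tendsto_cofinite_zero
    have h2 : Filter.Tendsto (fun _ : FreeGroup (Fin d) => (1:ℝ)) Filter.cofinite (nhds 1) :=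
      tendsto_const_nhds
    have : (0:ℝ) = 1 := tendsto_nhds_unique h1 h2
    norm_num at this
  · -- 0 < δ
    have hdisjoint : ∀ X : Finset ℕ, (X : Set ℕ).PairwiseDisjoint (sphere d) := by
      intro X p _ q _ hpq
      apply Finset.disjoint_left.mpr
      intro g hp hq
      rw [mem_sphere] at hp hq
      exact hpq (hp.symm.trans hq)
    have hZsummable : Summable (fun n => Z r δ n) := by
      apply summable_of_sum_range_le (c := ∑' g : FreeGroup (Fin d), cWeight r g ^ δ)
        (fun n => Z_nonneg hrpos δ n)
      intro m
      rw [show ∑ i ∈ Finset.range m, Z r δ i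
          = ∑ g ∈ (Finset.range m).biUnion (sphere d), cWeight r g ^ δ from
        (Finset.sum_biUnion (hdisjoint _)).symm]
      exact Summable.sum_le_tsum _ (fun g _ => Real.rpow_nonneg (cWeight_pos hrpos g).le δ) hF
    obtain ⟨n, hnZ, hn1⟩ : ∃ n, Z r δ n < 1/2 ∧ 1 ≤ n := by
      have h1 := (hZsummable.tendsto_atTop_zero.eventually_lt_const
        (by norm_num : (0:ℝ) < 1/2)).and (Filter.eventually_ge_atTop 1)
      exact h1.exists
    set B : ℝ := ∑ s ∈ Finset.range n, Z r δ s + 1 with hBdef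
    have hB0 : 0 < B := by
      have := Finset.sum_nonneg (fun i (_ : i ∈ Finset.range n) => Z_nonneg hrpos δ i)
      rw [hBdef]; linarith
    have hBs : ∀ s, s < n → Z r δ s ≤ B := by
      intro s hs
      have h1 := Finset.single_le_sum (f := fun i => Z r δ i)
        (fun i _ => Z_nonneg hrpos δ i) (Finset.mem_range.mpr hs)
      rw [hBdef]; linarith
    have hiter : ∀ q s, Z r δ (n * q + s) ≤ (1/2:ℝ) ^ q * Z r δ s := by
      intro q
      induction q with
      | zero => intro s; simp
      | succ q ih =>
        intro s
        have h1 : n * (q + 1) + s = n + (n * q + s) := by ring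
        rw [h1]
        calc Z r δ (n + (n * q + s)) ≤ Z r δ n * Z r δ (n * q + s) := Z_submul hrpos δ _ _
          _ ≤ (1/2) * ((1/2:ℝ) ^ q * Z r δ s) :=
            mul_le_mul hnZ.le (ih s) (Z_nonneg hrpos δ _) (by norm_num)
          _ = (1/2:ℝ) ^ (q + 1) * Z r δ s := by ring
    have hdecay : ∀ m, Z r δ m ≤ B * (1/2:ℝ) ^ (m / n) := by
      intro m
      have h1 : n * (m / n) + m % n = m := Nat.div_add_mod m n
      calc Z r δ m = Z r δ (n * (m / n) + m % n) := by rw [h1]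
        _ ≤ (1/2:ℝ) ^ (m / n) * Z r δ (m % n) := hiter _ _
        _ ≤ (1/2:ℝ) ^ (m / n) * B :=
          mul_le_mul_of_nonneg_left (hBs _ (Nat.mod_lt _ (by omega))) (by positivity)
        _ = B * (1/2:ℝ) ^ (m / n) := mul_comm _ _
    set θ : ℝ := (1/2 : ℝ) ^ ((n : ℝ)⁻¹) with hθdef
    have hθ0 : 0 < θ := Real.rpow_pos_of_pos (by norm_num) _
    have hθ1 : θ < 1 := Real.rpow_lt_one (by norm_num) (by norm_num)
      (by positivity)
    have hθm : ∀ m : ℕ, θ ^ m = (1/2:ℝ) ^ ((m : ℝ) * (n : ℝ)⁻¹) := by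
      intro m
      rw [mul_comm, Real.rpow_mul (by norm_num : (0:ℝ) ≤ 1/2), hθdef, Real.rpow_natCast]
    have hhalf : ∀ m : ℕ, ((1:ℝ)/2) ^ (m / n) ≤ 2 * θ ^ m := by
      intro m
      have e2 : m % n < n := Nat.mod_lt _ (by omega)
      have hnat : m < n * (m / n + 1) := by
        calc m = n * (m / n) + m % n := (Nat.div_add_mod m n).symm
          _ < n * (m / n) + n := by exact Nat.add_lt_add_left e2 _
          _ = n * (m / n + 1) := by ring
      have hreal : (m : ℝ) < (n : ℝ) * ((m / n : ℕ) + 1) := by exact_mod_cast hnat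
      have hn0 : (0:ℝ) < (n : ℝ) := by exact_mod_cast (by omega : 0 < n)
      have hq : (m : ℝ) * (n : ℝ)⁻¹ - 1 ≤ ((m / n : ℕ) : ℝ) := by
        have h6 : (m : ℝ) * (n : ℝ)⁻¹ < ((m / n : ℕ) : ℝ) + 1 := by
          rw [← div_eq_mul_inv, div_lt_iff₀ hn0]
          linarith [hreal]
        linarith
      calc ((1:ℝ)/2) ^ (m / n) = ((1:ℝ)/2) ^ (((m / n : ℕ) : ℝ)) := (Real.rpow_natCast _ _).symm
        _ ≤ ((1:ℝ)/2) ^ ((m : ℝ) * (n : ℝ)⁻¹ - 1) :=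
          Real.rpow_le_rpow_of_exponent_ge (by norm_num) (by norm_num) hq
        _ = 2 * θ ^ m := by
          rw [Real.rpow_sub (by norm_num : (0:ℝ) < 1/2), Real.rpow_one, hθm m]
          ring
    -- choose ε
    have hlogρ : Real.log ρ < 0 := Real.log_neg hρ0 hρ1
    have hlogθ : Real.log θ < 0 := Real.log_neg hθ0 hθ1
    set ε : ℝ := min δ (Real.log θ / (2 * Real.log ρ)) with hεdef
    have hεpos : 0 < ε := lt_min hδpos (div_pos_of_neg_of_neg hlogθ (by linarith))
    have hεδ : ε ≤ δ := min_le_left _ _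
    set Aq : ℝ := ρ ^ (-ε : ℝ) with hAqdef
    have hAq0 : 0 < Aq := Real.rpow_pos_of_pos hρ0 _
    have hAθ : Aq * θ < 1 := by
      have h1 : ε ≤ Real.log θ / (2 * Real.log ρ) := min_le_right _ _
      have h2 : Real.log Aq = -ε * Real.log ρ := Real.log_rpow hρ0 _
      have h4 : Real.log θ / (2 * Real.log ρ) * Real.log ρ ≤ ε * Real.log ρ :=
        mul_le_mul_of_nonpos_right h1 hlogρ.le
      have hne' : Real.log ρ ≠ 0 := ne_of_lt hlogρ
      have h5 : Real.log θ / (2 * Real.log ρ) * Real.log ρ = Real.log θ / 2 := by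
        field_simp
      have h3 : Real.log (Aq * θ) < 0 := by
        rw [Real.log_mul (ne_of_gt hAq0) (ne_of_gt hθ0), h2]
        rw [h5] at h4
        nlinarith
      calc Aq * θ = Real.exp (Real.log (Aq * θ)) := (Real.exp_log (mul_pos hAq0 hθ0)).symm
        _ < Real.exp 0 := Real.exp_lt_exp.mpr h3
        _ = 1 := Real.exp_zero
    set t : ℝ := δ - ε with htdef
    have ht0 : 0 ≤ t := by rw [htdef]; linarith
    have hZt : ∀ m, Z r t m ≤ (2 * B) * (Aq * θ) ^ m := by
      intro m
      have hterm : ∀ g ∈ sphere d m, cWeight r g ^ t ≤ Aq ^ m * cWeight r g ^ δ := by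
        intro g hg
        rw [mem_sphere] at hg
        have hcg : 0 < cWeight r g := cWeight_pos hrpos g
        have h1 : cWeight r g ^ t = cWeight r g ^ δ * cWeight r g ^ (-ε : ℝ) := by
          rw [htdef, sub_eq_add_neg, Real.rpow_add hcg]
        have h2 : cWeight r g ^ (-ε : ℝ) ≤ ((ρ : ℝ) ^ m) ^ (-ε : ℝ) := by
          apply Real.rpow_le_rpow_of_nonpos (pow_pos hρ0 m) ?_ (by linarith)
          rw [← hg]
          exact rhopow_le_cWeight hρ0.le hρle g
        have h3 : ((ρ : ℝ) ^ m) ^ (-ε : ℝ) = Aq ^ m := by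
          rw [← Real.rpow_natCast ρ m, ← Real.rpow_mul hρ0.le, mul_comm,
            Real.rpow_mul hρ0.le, Real.rpow_natCast]
        rw [h1]
        calc cWeight r g ^ δ * cWeight r g ^ (-ε : ℝ)
            ≤ cWeight r g ^ δ * Aq ^ m := by
              apply mul_le_mul_of_nonneg_left _ (Real.rpow_nonneg hcg.le _)
              rw [← h3]; exact h2
          _ = Aq ^ m * cWeight r g ^ δ := mul_comm _ _
      calc Z r t m ≤ ∑ g ∈ sphere d m, Aq ^ m * cWeight r g ^ δ := Finset.sum_le_sum hterm
        _ = Aq ^ m * Z r δ m := by rw [Z, ← Finset.mul_sum]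
        _ ≤ Aq ^ m * (B * (1/2:ℝ) ^ (m / n)) :=
          mul_le_mul_of_nonneg_left (hdecay m) (by positivity)
        _ ≤ Aq ^ m * (B * (2 * θ ^ m)) :=
          mul_le_mul_of_nonneg_left (mul_le_mul_of_nonneg_left (hhalf m) hB0.le) (by positivity)
        _ = (2 * B) * (Aq * θ) ^ m := by rw [mul_pow]; ring
    have hsumt : Summable (fun g : FreeGroup (Fin d) => cWeight r g ^ t) := by
      apply summable_of_sum_le (c := (2 * B) * (1 - Aq * θ)⁻¹)
        (fun g => Real.rpow_nonneg (cWeight_pos hrpos g).le t)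
      intro s
      have hsub : s ⊆ (Finset.range (s.sup (fun g => g.toWord.length) + 1)).biUnion (sphere d) := by
        intro g hg
        rw [Finset.mem_biUnion]
        exact ⟨g.toWord.length,
          Finset.mem_range.mpr (Nat.lt_succ_of_le (Finset.le_sup (f := fun g : FreeGroup (Fin d) => g.toWord.length) hg)), mem_sphere.mpr rfl⟩
      have hAθ0 : (0:ℝ) ≤ Aq * θ := (mul_pos hAq0 hθ0).le
      calc ∑ g ∈ s, cWeight r g ^ t
          ≤ ∑ g ∈ (Finset.range (s.sup (fun g => g.toWord.length) + 1)).biUnion (sphere d),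
              cWeight r g ^ t :=
            Finset.sum_le_sum_of_subset_of_nonneg hsub
              (fun g _ _ => Real.rpow_nonneg (cWeight_pos hrpos g).le t)
        _ = ∑ m ∈ Finset.range (s.sup (fun g => g.toWord.length) + 1), Z r t m :=
            Finset.sum_biUnion (hdisjoint _)
        _ ≤ ∑ m ∈ Finset.range (s.sup (fun g => g.toWord.length) + 1), (2 * B) * (Aq * θ) ^ m :=
            Finset.sum_le_sum (fun m _ => hZt m)
        _ = (2 * B) * ∑ m ∈ Finset.range (s.sup (fun g => g.toWord.length) + 1), (Aq * θ) ^ m := by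
            rw [Finset.mul_sum]
        _ ≤ (2 * B) * (1 - Aq * θ)⁻¹ := by
            apply mul_le_mul_of_nonneg_left _ (by positivity)
            calc ∑ m ∈ Finset.range (s.sup (fun g => g.toWord.length) + 1), (Aq * θ) ^ m
                ≤ ∑' m : ℕ, (Aq * θ) ^ m :=
                  Summable.sum_le_tsum _ (fun i _ => pow_nonneg hAθ0 i)
                    (summable_geometric_of_lt_one hAθ0 hAθ)
              _ = (1 - Aq * θ)⁻¹ := tsum_geometric_of_lt_one hAθ0 hAθ
    have htS : t ∈ S := by
      refine ⟨ht0, ?_⟩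
      exact hsumt.comp_injective Subtype.coe_injective
    have hle : δ ≤ t := by
      rw [hδS]
      exact csInf_le ⟨0, fun x hx => hx.1⟩ htS
    rw [htdef] at hle
    linarith
end

section
/- Let d ≥ 2 and N a non-trivial normal subgroup of the free group F_d = ⟨g₁,…,g_d⟩. Let V = {g₁^{±1},…,g_d^{±1}}. Then there exists a finite set F of reduced words representing elements of N ∪ {id}, such that for all i, j ∈ V there exists τ ∈ F ∪ {∅} with the property that the concatenation i τ j is again a reduced word (no cancellation at the junctions). -/
/-- The no-cancellation relation between adjacent letters. -/
def NC {α : Type*} (a b : α × Bool) : Prop := ¬(a.1 = b.1 ∧ a.2 = !b.2)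

lemma chain'_reduce {α : Type*} [DecidableEq α] (L : List (α × Bool)) :
    List.IsChain NC (FreeGroup.reduce L) := by
  induction L with
  | nil => exact List.IsChain.nil
  | cons x L ih =>
    rw [FreeGroup.reduce.cons]
    rcases h : FreeGroup.reduce L with _ | ⟨y, tl⟩
    · exact List.IsChain.singleton _
    · rw [h] at ih
      by_cases hc : x.1 = y.1 ∧ x.2 = !y.2
      · simp only [hc, if_true]
        exact ih.tail
      · simp only [hc, if_false]
        exact List.IsChain.cons_cons hc ih

lemma reduce_eq_self_of_chain' {α : Type*} [DecidableEq α] {L : List (α × Bool)}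
    (h : List.IsChain NC L) : FreeGroup.reduce L = L := by
  induction L with
  | nil => rfl
  | cons x L ih =>
    have hL := ih h.tail
    rw [FreeGroup.reduce.cons, hL]
    rcases L with _ | ⟨y, tl⟩
    · rfl
    · have : NC x y := (List.isChain_cons_cons.mp h).1
      simp only [NC] at this
      simp [this]

lemma exists_tau {d : ℕ} (hd : 2 ≤ d) (N : Subgroup (FreeGroup (Fin d))) [N.Normal]
    (hN : N ≠ ⊥) (a : Fin d) :
    ∃ τ : List (Fin d × Bool), FreeGroup.reduce τ = τ ∧ FreeGroup.mk τ ∈ N ∧ τ ≠ [] ∧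
      (∀ x ∈ τ.head?, x.1 ≠ a) ∧ (∀ x ∈ τ.getLast?, x.1 ≠ a) := by
  obtain ⟨⟨n, hnN⟩, hn1⟩ := Subgroup.ne_bot_iff_exists_ne_one.mp hN
  have hn1' : n ≠ 1 := by simpa [Subtype.ext_iff] using hn1
  set w := n.toWord with hw
  have hred : FreeGroup.reduce w = w := FreeGroup.reduce_toWord n
  have hmk : FreeGroup.mk w = n := FreeGroup.mk_toWord
  have hne : w ≠ [] := fun h => hn1' (FreeGroup.toWord_eq_nil_iff.mp h)
  have hch : List.IsChain NC w := by rw [← hred]; exact chain'_reduce w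
  set f := w.head hne with hf
  set l := w.getLast hne with hl
  by_cases hcase : f.1 ≠ a ∧ l.1 ≠ a
  · refine ⟨w, hred, hmk ▸ hnN, hne, ?_, ?_⟩
    · intro x hx
      rw [List.head?_eq_head hne, Option.mem_some_iff] at hx
      subst hx; exact hcase.1
    · intro x hx
      rw [List.getLast?_eq_getLast hne, Option.mem_some_iff] at hx
      subst hx; exact hcase.2
  · -- pick c ≠ a
    obtain ⟨c, hca⟩ : ∃ c : Fin d, c ≠ a := by
      have : Nontrivial (Fin d) := Fin.nontrivial_iff_two_le.mpr hd
      exact exists_ne a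
    set s : Bool := if f.1 = c then f.2 else !l.2 with hs
    have hfc : f ≠ (c, !s) := by
      by_cases h : f.1 = c
      · simp only [hs, h, if_true]
        intro he
        have := congrArg Prod.snd he
        simp at this
      · intro he; exact h (congrArg Prod.fst he)
    have hlc : l ≠ (c, s) := by
      by_cases h : f.1 = c
      · -- then l.1 = a ≠ c
        have hla : l.1 = a := by
          rcases not_and_or.mp hcase with h1 | h1
          · exact (hca (h.symm.trans (not_not.mp h1))).elim
          · exact not_not.mp h1
        intro he
        exact hca ((congrArg Prod.fst he).symm.trans hla)
      · simp only [hs, h, if_false]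
        intro he
        have := congrArg Prod.snd he
        simp at this
    refine ⟨(c, s) :: (w ++ [(c, !s)]), ?_, ?_, by simp, ?_, ?_⟩
    · apply reduce_eq_self_of_chain'
      rw [List.isChain_cons]
      constructor
      · intro y hy
        rw [List.head?_append_of_ne_nil _ hne] at hy
        rw [List.head?_eq_head hne] at hy
        cases hy
        intro ⟨h1, h2⟩
        exact hfc (Prod.ext h1.symm (by revert h2; cases f.2 <;> cases s <;> simp))
      · rw [List.isChain_append]
        refine ⟨hch, by simp, ?_⟩
        intro x hx y hy
        rw [List.getLast?_eq_getLast hne] at hx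
        cases hx
        simp only [List.head?_cons, Option.mem_some_iff] at hy
        cases hy
        intro ⟨h1, h2⟩
        exact hlc (Prod.ext h1 (by revert h2; cases l.2 <;> cases s <;> simp))
    · have : FreeGroup.mk ((c, s) :: (w ++ [(c, !s)]))
          = FreeGroup.mk [(c, s)] * n * (FreeGroup.mk [(c, s)])⁻¹ := by
        rw [FreeGroup.inv_mk, ← hmk, FreeGroup.mul_mk, FreeGroup.mul_mk]
        simp [FreeGroup.invRev]
      rw [this]
      exact Subgroup.Normal.conj_mem ‹N.Normal› n hnN _
    · intro x hx
      simp only [List.head?_cons, Option.mem_some_iff] at hx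
      cases hx; exact hca
    · intro x hx
      rw [List.getLast?_eq_getLast (by simp)] at hx
      cases hx
      simp [List.getLast_append]
      exact hca


/-- For `d ≥ 2` and a non-trivial normal subgroup `N` of the free group `F_d`, there is a finite
set `F` of reduced words representing elements of `N ∪ {id}` such that any two letters `i, j`
can be connected: there is `τ ∈ F ∪ {∅}` with `i τ j` reduced (no cancellation). -/
theorem stmt15 {d : ℕ} (hd : 2 ≤ d)
    (N : Subgroup (FreeGroup (Fin d))) [N.Normal] (hN : N ≠ ⊥) :
    ∃ F : Finset (List (Fin d × Bool)),
      (∀ w ∈ F, FreeGroup.reduce w = w ∧ FreeGroup.mk w ∈ N) ∧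
      (∀ i j : Fin d × Bool, ∃ τ : List (Fin d × Bool), (τ ∈ F ∨ τ = []) ∧
        FreeGroup.reduce (i :: (τ ++ [j])) = i :: (τ ++ [j])) := by
  choose τ h1 h2 h3 h4 h5 using fun a => exists_tau hd N hN a
  classical
  refine ⟨Finset.image τ Finset.univ, ?_, ?_⟩
  · intro w hw
    obtain ⟨a, -, rfl⟩ := Finset.mem_image.mp hw
    exact ⟨h1 a, h2 a⟩
  · intro i j
    by_cases hc : i.1 = j.1 ∧ i.2 = !j.2
    · refine ⟨τ i.1, Or.inl (Finset.mem_image.mpr ⟨i.1, Finset.mem_univ _, rfl⟩), ?_⟩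
      apply reduce_eq_self_of_chain'
      rw [List.isChain_cons]
      constructor
      · intro y hy
        rw [List.head?_append_of_ne_nil _ (h3 i.1)] at hy
        intro ⟨hy1, _⟩
        exact h4 i.1 y hy (hy1 ▸ rfl)
      · rw [List.isChain_append]
        refine ⟨by rw [← h1 i.1]; exact chain'_reduce _, by simp, ?_⟩
        intro x hx y hy
        simp only [List.head?_cons, Option.mem_some_iff] at hy
        subst hy
        intro ⟨hx1, _⟩
        exact h5 i.1 x hx (hx1.trans hc.1.symm)
    · refine ⟨[], Or.inr rfl, ?_⟩
      apply reduce_eq_self_of_chain'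
      simpa using List.isChain_pair.mpr hc
end

section
/- Let Σ be a Markov shift over a finite alphabet I, G a countable group, and Ψ : I* → G a semigroup homomorphism with Ψ(Σ*) = G, satisfying: for all a, b ∈ I there is γ ∈ Ψ⁻¹{id} ∩ Σ* ∪ {∅} with aγb ∈ Σ*. Then the pressure P(φ, Ψ⁻¹{g} ∩ Σ*) is independent of g ∈ G, for any bounded function φ : Σ → ℝ that is measurable with respect to finitely many coordinates, where P(φ, C) := limsup_n (1/n) log Σ_{ω ∈ C, |ω| = n} exp(S_ω φ) (suitably interpreted over windows of lengths near n). -/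
open Filter

/-- The subshift of finite type over alphabet `I` with transition relation `A`. -/
def SFT {I : Type*} (A : I → I → Prop) : Type _ := {ω : ℕ → I // ∀ n, A (ω n) (ω (n + 1))}

/-- The left shift on the subshift. -/
def SFT.shift {I : Type*} {A : I → I → Prop} (ω : SFT A) : SFT A :=
  ⟨fun n => ω.1 (n + 1), fun n => ω.2 (n + 1)⟩

/-- The cylinder set determined by a finite word. -/
def cylinder {I : Type*} (A : I → I → Prop) (l : List I) : Set (SFT A) :=
  {ω | ∀ i, ∀ h : i < l.length, ω.1 i = l.get ⟨i, h⟩}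

/-- The `n`-th Birkhoff (ergodic) sum of `φ` under the shift. -/
noncomputable def birkhoff {I : Type*} {A : I → I → Prop} (φ : SFT A → ℝ) (n : ℕ)
    (ω : SFT A) : ℝ :=
  ∑ i ∈ Finset.range n, φ (SFT.shift^[i] ω)

/-- `S_ω φ`: the supremum of the Birkhoff sum over the cylinder of the word `l`. -/
noncomputable def Sword {I : Type*} (A : I → I → Prop) (φ : SFT A → ℝ) (l : List I) : ℝ :=
  sSup ((fun τ => birkhoff φ l.length τ) '' cylinder A l)

/-- The weighted count over the admissible words of length `n` lying in the fibre
`Ψ⁻¹{g}` of the semigroup homomorphism induced by the letter map `Ψ`. -/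
noncomputable def cosetSum {I : Type*} (A : I → I → Prop) {G : Type*} [Group G]
    (Ψ : I → G) (φ : SFT A → ℝ) (g : G) (n : ℕ) : ℝ :=
  ∑' l : {l : List I // l.length = n ∧ l.Chain' A ∧ (l.map Ψ).prod = g},
    Real.exp (Sword A φ (l : List I))

/-- The pressure of `φ` on the fibre `Ψ⁻¹{g} ∩ Σ*`. -/
noncomputable def cosetPressure {I : Type*} (A : I → I → Prop) {G : Type*} [Group G]
    (Ψ : I → G) (φ : SFT A → ℝ) (g : G) : ℝ :=
  limsup (fun n : ℕ => (n : ℝ)⁻¹ * Real.log (cosetSum A Ψ φ g n)) atTop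


section Glue
variable {I : Type*} {A : I → I → Prop}

lemma chain'_glue {lw rw γ : List I} {a b : I}
    (hl : lw.Chain' A) (hr : rw.Chain' A)
    (ha : lw.getLast? = some a) (hb : rw.head? = some b)
    (hγ : (a :: (γ ++ [b])).Chain' A) :
    (lw ++ γ ++ rw).Chain' A := by
  have hγ1 : ∀ y ∈ (γ ++ [b]).head?, A a y := (List.isChain_cons.mp hγ).1
  have hγ2 : (γ ++ [b]).Chain' A := (List.isChain_cons.mp hγ).2
  have hγ3 : γ.Chain' A := (List.isChain_append.mp hγ2).1
  have hγ4 : ∀ x ∈ γ.getLast?, ∀ y ∈ ([b] : List I).head?, A x y :=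
    (List.isChain_append.mp hγ2).2.2
  have hlg : (lw ++ γ).Chain' A := by
    apply List.isChain_append.mpr
    refine ⟨hl, hγ3, ?_⟩
    intro x hx y hy
    rw [ha] at hx
    cases hx
    apply hγ1
    rw [List.head?_append, hy]; rfl
  apply List.isChain_append.mpr
  refine ⟨hlg, hr, ?_⟩
  intro x hx y hy
  rw [hb] at hy; cases hy
  rcases List.eq_nil_or_concat γ with h0 | ⟨γ', c, rfl⟩
  · subst h0
    rw [List.append_nil, ha] at hx; cases hx
    exact hγ1 b (by simp)
  · rw [List.getLast?_append_of_ne_nil _ (by simp)] at hx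
    exact hγ4 x hx b rfl

end Glue

section Words
variable {I : Type*} {G : Type*} [Group G]

/-- Admissible word with prescribed product, length, first and last letters. -/
def FibW (A : I → I → Prop) (Ψ : I → G) (h : G) (n : ℕ) (b a : I) : Prop :=
  ∃ l : List I, l.Chain' A ∧ (l.map Ψ).prod = h ∧ l.length = n ∧
    l.head? = some b ∧ l.getLast? = some a

/-- Admissible word anchored at `o`: fits after `o` and ends with `o`. -/
def Anc (A : I → I → Prop) (Ψ : I → G) (o : I) (h : G) (n : ℕ) : Prop :=
  ∃ l : List I, (o :: l).Chain' A ∧ (l.map Ψ).prod = h ∧ l.length = n ∧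
    l.getLast? = some o

variable {A : I → I → Prop} {Ψ : I → G} {o : I} (gl : I → I → List I)
variable (hgl1 : ∀ a b, ((gl a b).map Ψ).prod = 1)
variable (hgl2 : ∀ a b, (a :: (gl a b ++ [b])).Chain' A)

lemma FibW.ne_nil {l : List I} {b : I} (h : l.head? = some b) : l ≠ [] := by
  intro e; subst e; simp at h

include hgl1 hgl2 in
lemma FibW.splice {h h' : G} {n n' : ℕ} {b a b' a' : I}
    (w : FibW A Ψ h n b a) (w' : FibW A Ψ h' n' b' a') :
    FibW A Ψ (h * h') (n + ((gl a b').length + n')) b a' := by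
  obtain ⟨l, hc, hp, hn, hh, hl⟩ := w
  obtain ⟨r, hc', hp', hn', hh', hl'⟩ := w'
  refine ⟨l ++ gl a b' ++ r, chain'_glue hc hc' hl hh' (hgl2 a b'), ?_, ?_, ?_, ?_⟩
  · simp [List.prod_append, hp, hp', hgl1 a b']
  · simp [hn, hn']
  · rw [List.append_assoc, List.head?_append, hh]; rfl
  · rw [List.getLast?_append_of_ne_nil _ (FibW.ne_nil hh'), hl']

lemma FibW.single (o : I) : FibW A Ψ (Ψ o) 1 o o :=
  ⟨[o], by simp [List.Chain'], by simp, by simp, rfl, rfl⟩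

lemma Anc.ne_nil {l : List I} {b : I} (h : l.getLast? = some b) : l ≠ [] := by
  intro e; subst e; simp at h

lemma Anc.pos {h : G} {n : ℕ} (w : Anc A Ψ o h n) : 1 ≤ n := by
  obtain ⟨l, _, _, hn, hl⟩ := w
  have := Anc.ne_nil hl
  cases l with
  | nil => exact absurd rfl this
  | cons x t => simp [← hn]

lemma Anc.concat {h h' : G} {n n' : ℕ}
    (w : Anc A Ψ o h n) (w' : Anc A Ψ o h' n') : Anc A Ψ o (h * h') (n + n') := by
  obtain ⟨l, hc, hp, hn, hl⟩ := w
  obtain ⟨r, hc', hp', hn', hl'⟩ := w'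
  have hrne : r ≠ [] := Anc.ne_nil hl'
  have hlne : l ≠ [] := Anc.ne_nil hl
  refine ⟨l ++ r, ?_, by simp [hp, hp'], by simp [hn, hn'], ?_⟩
  · have : ((o :: l) ++ r).Chain' A := by
      apply List.isChain_append.mpr
      refine ⟨hc, (List.isChain_cons.mp hc').2, ?_⟩
      intro x hx y hy
      have : (o :: l).getLast? = some o := by
        rw [show (o :: l) = [o] ++ l from rfl,
          List.getLast?_append_of_ne_nil _ hlne, hl]
      rw [this] at hx; cases hx
      exact (List.isChain_cons.mp hc').1 y hy
    simpa using this
  · rw [List.getLast?_append_of_ne_nil _ hrne, hl']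

lemma Anc.toFibW {h : G} {n : ℕ} (w : Anc A Ψ o h n) :
    FibW A Ψ (Ψ o * h) (n + 1) o o := by
  obtain ⟨l, hc, hp, hn, hl⟩ := w
  have hlne : l ≠ [] := Anc.ne_nil hl
  refine ⟨o :: l, hc, by simp [hp], by simp [hn], rfl, ?_⟩
  rw [show (o :: l) = [o] ++ l from rfl, List.getLast?_append_of_ne_nil _ hlne, hl]

lemma Anc.ofFibW_oo {h : G} {n : ℕ} (hn : 1 ≤ n)
    (w : FibW A Ψ (Ψ o * h) (n + 1) o o) : Anc A Ψ o h n := by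
  obtain ⟨l, hc, hp, hln, hh, hl⟩ := w
  obtain ⟨t, rfl⟩ : ∃ t, l = o :: t := by
    cases l with
    | nil => simp at hh
    | cons x t => exact ⟨t, by injection hh with h'; rw [h']⟩
  have htne : t ≠ [] := by
    intro e; subst e; simp at hln; omega
  refine ⟨t, hc, ?_, by simpa using hln, ?_⟩
  · have : Ψ o * (t.map Ψ).prod = Ψ o * h := by simpa using hp
    exact mul_left_cancel this
  · rwa [show (o :: t) = [o] ++ t from rfl,
      List.getLast?_append_of_ne_nil _ htne] at hl

include hgl1 hgl2 in
lemma Anc.ofFibW {h : G} {n : ℕ} {b a : I} (w : FibW A Ψ h n b a) :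
    Anc A Ψ o (h * Ψ o) ((gl o b).length + (n + ((gl a o).length + 1))) := by
  have x1 := FibW.splice gl hgl1 hgl2 w (FibW.single o)
  have x2 := FibW.splice gl hgl1 hgl2 (FibW.single (A := A) (Ψ := Ψ) o) x1
  have hpos : 1 ≤ (gl o b).length + (n + ((gl a o).length + 1)) := by omega
  refine Anc.ofFibW_oo hpos ?_
  have e2 : 1 + ((gl o b).length + (n + ((gl a o).length + 1)))
      = ((gl o b).length + (n + ((gl a o).length + 1))) + 1 := by omega
  rw [e2] at x2
  exact x2

lemma Anc.toFib {h : G} {n : ℕ} (w : Anc A Ψ o h n) :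
    ∃ l : List I, l.length = n ∧ l.Chain' A ∧ (l.map Ψ).prod = h := by
  obtain ⟨l, hc, hp, hn, _⟩ := w
  exact ⟨l, hn, (List.isChain_cons.mp hc).2, hp⟩

end Words


section NS

lemma semigroup_nsmul {Λ : Set ℕ} (hadd : ∀ x ∈ Λ, ∀ y ∈ Λ, x + y ∈ Λ)
    {x : ℕ} (hx : x ∈ Λ) : ∀ m : ℕ, 1 ≤ m → m * x ∈ Λ := by
  intro m hm
  induction m with
  | zero => omega
  | succ k ih =>
    rcases Nat.eq_or_lt_of_le hm with h | h
    · simpa [← h] using hx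
    · have hk : 1 ≤ k := by omega
      have := hadd _ (ih hk) _ hx
      simpa [Nat.succ_mul] using this

lemma semigroup_gcd (Λ : Set ℕ) (hadd : ∀ x ∈ Λ, ∀ y ∈ Λ, x + y ∈ Λ)
    (a₀ : ℕ) (ha : a₀ ∈ Λ) (ha0 : 0 < a₀) :
    ∃ d : ℕ, 0 < d ∧ (∀ x ∈ Λ, (d:ℤ) ∣ (x:ℤ)) ∧ ∃ K : ℕ, ∀ k, K ≤ k → d * k ∈ Λ := by
  classical
  set Λ₀ : Set ℕ := insert 0 Λ with hΛ₀
  have hadd0 : ∀ x ∈ Λ₀, ∀ y ∈ Λ₀, x + y ∈ Λ₀ := by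
    rintro x (rfl | hx) y (rfl | hy)
    · exact Set.mem_insert _ _
    · simpa [hΛ₀] using Set.mem_insert_iff.mpr (Or.inr hy)
    · simpa [hΛ₀] using Set.mem_insert_iff.mpr (Or.inr hx)
    · exact Set.mem_insert_iff.mpr (Or.inr (hadd _ hx _ hy))
  set T : AddSubgroup ℤ :=
    { carrier := {z : ℤ | ∃ p ∈ Λ₀, ∃ q ∈ Λ₀, z = (p:ℤ) - q}
      zero_mem' := ⟨0, Set.mem_insert _ _, 0, Set.mem_insert _ _, by simp⟩
      add_mem' := by
        rintro z w ⟨p, hp, q, hq, rfl⟩ ⟨p', hp', q', hq', rfl⟩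
        exact ⟨p + p', hadd0 _ hp _ hp', q + q', hadd0 _ hq _ hq', by push_cast; ring⟩
      neg_mem' := by
        rintro z ⟨p, hp, q, hq, rfl⟩
        exact ⟨q, hq, p, hp, by ring⟩ } with hT
  have hΛT : ∀ x ∈ Λ, (x:ℤ) ∈ T := by
    intro x hx
    exact ⟨x, Set.mem_insert_iff.mpr (Or.inr hx), 0, Set.mem_insert _ _, by simp⟩
  set H : AddSubgroup ℤ := AddSubgroup.closure ((fun n : ℕ => (n:ℤ)) '' Λ) with hH
  obtain ⟨a, haH⟩ := Int.subgroup_cyclic H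
  have hmemH : ∀ x ∈ Λ, (x:ℤ) ∈ H := by
    intro x hx
    exact AddSubgroup.subset_closure ⟨x, hx, rfl⟩
  have hdvd : ∀ x ∈ Λ, a ∣ (x:ℤ) := by
    intro x hx
    have := hmemH x hx
    rw [haH, AddSubgroup.mem_closure_singleton] at this
    obtain ⟨n, hn⟩ := this
    exact ⟨n, by rw [← hn, smul_eq_mul, mul_comm]⟩
  have ha0' : a ≠ 0 := by
    intro h
    have := hdvd a₀ ha
    rw [h] at this
    simp at this
    omega
  have haT : a ∈ T := by
    have haH' : a ∈ H := by
      rw [haH]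
      exact AddSubgroup.subset_closure rfl
    have hHT : H ≤ T := by
      rw [hH]
      apply AddSubgroup.closure_le T |>.mpr
      rintro z ⟨x, hx, rfl⟩
      exact hΛT x hx
    exact hHT haH'
  set d : ℕ := a.natAbs with hdd
  have hd0 : 0 < d := by
    simpa [hdd] using Int.natAbs_pos.mpr ha0'
  have hdvd' : ∀ x ∈ Λ, (d:ℤ) ∣ (x:ℤ) := by
    intro x hx
    exact (Int.natAbs_dvd).mpr (hdvd x hx)
  refine ⟨d, hd0, hdvd', ?_⟩
  -- express d (or -d) as difference of two elements of Λ₀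
  obtain ⟨p, hp, q, hq, hpq⟩ := haT
  have hcase : ∃ p ∈ Λ₀, ∃ q ∈ Λ₀, (d:ℤ) = (p:ℤ) - q := by
    rcases Int.natAbs_eq a with h | h
    · exact ⟨p, hp, q, hq, by rw [← hpq, ← h]⟩
    · refine ⟨q, hq, p, hp, ?_⟩
      have : (d:ℤ) = -a := by omega
      rw [this, hpq]; ring
  clear hpq hp hq
  obtain ⟨p, hp, q, hq, hpq⟩ := hcase
  have hpq' : p = q + d := by omega
  rcases Nat.eq_zero_or_pos q with hq0 | hq0
  · -- q = 0, so p = d ∈ Λ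
    subst hq0
    have hpd : p = d := by omega
    have hdΛ : d ∈ Λ := by
      rcases Set.mem_insert_iff.mp hp with h0 | h
      · omega
      · rwa [hpd] at h
    refine ⟨1, fun k hk => ?_⟩
    have := semigroup_nsmul hadd hdΛ k hk
    simpa [Nat.mul_comm] using this
  · -- q > 0
    have hqΛ : q ∈ Λ := by
      rcases Set.mem_insert_iff.mp hq with h0 | h
      · omega
      · exact h
    have hpΛ : p ∈ Λ := by
      rcases Set.mem_insert_iff.mp hp with h0 | h
      · omega
      · exact h
    obtain ⟨q', hq'⟩ : d ∣ q := by
      have := hdvd' q hqΛ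
      exact_mod_cast this
    have hq'0 : 0 < q' := by
      rcases Nat.eq_zero_or_pos q' with h | h
      · subst h; simp at hq'; omega
      · exact h
    refine ⟨q' * q' + 1, fun k hk => ?_⟩
    set x : ℕ := (k - 1) % q' + 1 with hx
    set s : ℕ := (k - 1) / q' with hs
    have hxq : x ≤ q' := by
      have := Nat.mod_lt (k - 1) hq'0
      omega
    have hks : k = x + q' * s := by
      rw [hx, hs]
      have := Nat.div_add_mod (k - 1) q'
      omega
    have hsx : x ≤ s := by
      have h2 : q' ≤ s := by
        rw [hs]
        exact Nat.le_div_iff_mul_le hq'0 |>.mpr (by omega)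
      omega
    obtain ⟨y, hy⟩ : ∃ y, s = x + y := ⟨s - x, by omega⟩
    have hkey : d * k = x * p + y * q := by
      rw [hks, hy, hpq', hq']
      ring
    have hxp : x * p ∈ Λ := semigroup_nsmul hadd hpΛ x (by omega)
    rcases Nat.eq_zero_or_pos y with hy0 | hy0
    · subst hy0
      rw [hkey]
      simpa using hxp
    · have hyq : y * q ∈ Λ := semigroup_nsmul hadd hqΛ y (by omega)
      rw [hkey]
      exact hadd _ hxp _ hyq

end NS


section Transfer
variable {I : Type*} {G : Type*} [Group G]

/-- nonemptiness of the fibre of coset `g` at length `n` -/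
def Fib (A : I → I → Prop) (Ψ : I → G) (g : G) (n : ℕ) : Prop :=
  ∃ l : List I, l.length = n ∧ l.Chain' A ∧ (l.map Ψ).prod = g

variable {A : I → I → Prop} {Ψ : I → G} {o : I} (gl : I → I → List I)
variable (hgl1 : ∀ a b, ((gl a b).map Ψ).prod = 1)
variable (hgl2 : ∀ a b, (a :: (gl a b ++ [b])).Chain' A)

lemma fibW_of_fib {g : G} {n : ℕ} (h : Fib A Ψ g n) (hn : 1 ≤ n) :
    ∃ b a, FibW A Ψ g n b a := by
  obtain ⟨l, hn', hc, hp⟩ := h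
  have hne : l ≠ [] := by intro e; subst e; simp at hn'; omega
  exact ⟨l.head hne, l.getLast hne, l, hc, hp, hn',
    List.head?_eq_head hne, List.getLast?_eq_getLast hne⟩

lemma fib_of_fibW {g : G} {n : ℕ} {b a : I} (h : FibW A Ψ g n b a) : Fib A Ψ g n := by
  obtain ⟨l, hc, hp, hn, _, _⟩ := h
  exact ⟨l, hn, hc, hp⟩

include hgl1 hgl2 in
lemma anc_exists (hsurj : ∀ g : G, ∃ l : List I, l.Chain' A ∧ (l.map Ψ).prod = g)
    (h : G) : ∃ n, Anc A Ψ o h n := by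
  obtain ⟨l, hc, hp⟩ := hsurj (h * (Ψ o)⁻¹)
  cases l with
  | nil =>
    have h1 : h * (Ψ o)⁻¹ = 1 := by simpa using hp.symm
    have hh : h = Ψ o := mul_inv_eq_one.mp h1
    refine ⟨(gl o o).length + 1, gl o o ++ [o], hgl2 o o, ?_, by simp, by simp⟩
    simp [hgl1, hh]
  | cons x t =>
    have hw : FibW A Ψ (h * (Ψ o)⁻¹) (x :: t).length x ((x :: t).getLast (by simp)) :=
      ⟨x :: t, hc, hp, rfl, rfl, List.getLast?_eq_getLast (by simp)⟩
    have := Anc.ofFibW (o := o) gl hgl1 hgl2 hw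
    rw [inv_mul_cancel_right] at this
    exact ⟨_, this⟩

include hgl1 hgl2 in
lemma fib_transfer (o : I) (hsurj : ∀ g : G, ∃ l : List I, l.Chain' A ∧ (l.map Ψ).prod = g)
    (g' g : G) (N : ℕ) (hN : 1 ≤ N)
    (hcof : ∀ n, N ≤ n → Fib A Ψ g' n) :
    ∃ N', ∀ m, N' ≤ m → Fib A Ψ g m := by
  classical
  set Λ : Set ℕ := {n | Anc A Ψ o 1 n} with hΛ
  have hadd : ∀ x ∈ Λ, ∀ y ∈ Λ, x + y ∈ Λ := by
    intro x hx y hy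
    have := Anc.concat hx hy
    simpa [hΛ] using this
  obtain ⟨a₀, ha₀⟩ := anc_exists (o := o) gl hgl1 hgl2 hsurj (1 : G)
  obtain ⟨d, hd0, hdvd, K, hK⟩ :=
    semigroup_gcd Λ hadd a₀ ha₀ (Anc.pos ha₀)
  obtain ⟨n₀, hn₀⟩ := anc_exists (o := o) gl hgl1 hgl2 hsurj (g' * Ψ o)
  obtain ⟨ninv, hninv⟩ := anc_exists (o := o) gl hgl1 hgl2 hsurj (g' * Ψ o)⁻¹
  obtain ⟨t₁, ht₁⟩ := anc_exists (o := o) gl hgl1 hgl2 hsurj ((Ψ o)⁻¹ * g'⁻¹ * g * g'⁻¹)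
  have hv' : ∀ j : ℕ, ∃ b a : I, FibW A Ψ g' (N + j) b a := by
    intro j
    exact fibW_of_fib (hcof (N + j) (by omega)) (by omega)
  choose vb va hv using hv'
  have hres : ∀ j : ℕ,
      (d:ℤ) ∣ ((N:ℤ) + j + ((gl o (vb j)).length + ((gl (va j) o).length + 1)) - n₀) := by
    intro j
    have h1 : Anc A Ψ o (g' * Ψ o)
        ((gl o (vb j)).length + ((N + j) + ((gl (va j) o).length + 1))) :=
      Anc.ofFibW gl hgl1 hgl2 (hv j)
    have ecan : (g' * Ψ o) * (g' * Ψ o)⁻¹ = 1 := mul_inv_cancel _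
    have h2 : ((gl o (vb j)).length + ((N + j) + ((gl (va j) o).length + 1))) + ninv ∈ Λ := by
      have h2' := h1.concat hninv
      rw [ecan] at h2'
      exact h2'
    have h3 : n₀ + ninv ∈ Λ := by
      have h3' := hn₀.concat hninv
      rw [ecan] at h3'
      exact h3'
    have h4 := dvd_sub (hdvd _ h2) (hdvd _ h3)
    have e : (((gl o (vb j)).length + ((N + j) + ((gl (va j) o).length + 1)) + ninv : ℕ) : ℤ)
        - ((n₀ + ninv : ℕ) : ℤ)
        = (N:ℤ) + j + ((gl o (vb j)).length + ((gl (va j) o).length + 1)) - n₀ := by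
      push_cast; ring
    rwa [e] at h4
  set κ : ℕ → ℕ := fun j => (gl o (vb j)).length + ((gl (va j) o).length + 1) with hκ
  set κmax : ℕ := (Finset.range d).sup κ with hκmax
  set N' : ℕ := 2 * (N + d) + κmax + t₁ + d * K + d + 1 with hN'
  refine ⟨N', fun m hm => ?_⟩
  set z : ℤ := ((m:ℤ) - N - n₀ - t₁) % d with hz
  have hz0 : 0 ≤ z := Int.emod_nonneg _ (by exact_mod_cast hd0.ne')
  have hzd : z < d := Int.emod_lt_of_pos _ (by exact_mod_cast hd0)
  set j : ℕ := z.toNat with hj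
  have hjz : (j:ℤ) = z := Int.toNat_of_nonneg hz0
  have hjd : j < d := by omega
  have hdvdz : (d:ℤ) ∣ ((m:ℤ) - N - n₀ - t₁ - j) := by
    refine ⟨((m:ℤ) - N - n₀ - t₁) / d, ?_⟩
    rw [hjz, hz, Int.emod_def]
    ring
  set L : ℕ := 2 * (N + j) + κ j + t₁ with hL
  have hLm : (d:ℤ) ∣ ((m:ℤ) - L) := by
    have e : ((m:ℤ) - L) = ((m:ℤ) - N - n₀ - t₁ - j)
        - ((N:ℤ) + j + κ j - n₀) := by
      rw [hL]; push_cast; ring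
    rw [e]
    exact dvd_sub hdvdz (hres j)
  have hκj : κ j ≤ κmax := Finset.le_sup (Finset.mem_range.mpr hjd)
  have hLle : L + d * K ≤ m := by omega
  have hLm' : L ≤ m := by omega
  set lam : ℕ := m - L with hlam
  have hdlam : d ∣ lam := by
    have hcast : ((lam:ℕ):ℤ) = (m:ℤ) - L := by
      rw [hlam]
      push_cast [Nat.cast_sub hLm']
      ring
    have h5 : (d:ℤ) ∣ ((lam:ℕ):ℤ) := by rw [hcast]; exact hLm
    exact_mod_cast h5
  obtain ⟨k, hk⟩ := hdlam
  have hkK : K ≤ k := by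
    have hdK : d * K ≤ d * k := by omega
    exact Nat.le_of_mul_le_mul_left hdK hd0
  have hloop : Anc A Ψ o 1 (d * k) := hK k hkK
  have hmid : Anc A Ψ o ((Ψ o)⁻¹ * g'⁻¹ * g * g'⁻¹) (t₁ + d * k) := by
    have := ht₁.concat hloop
    simpa using this
  have hmidW := hmid.toFibW
  have x1 := FibW.splice gl hgl1 hgl2 (hv j) hmidW
  have x2 := FibW.splice gl hgl1 hgl2 x1 (hv j)
  have hprod : g' * (Ψ o * ((Ψ o)⁻¹ * g'⁻¹ * g * g'⁻¹)) * g' = g := by group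
  have hlen : (N + j) + ((gl (va j) o).length + ((t₁ + d * k) + 1))
      + ((gl o (vb j)).length + (N + j)) = m := by
    have hκj' : κ j = (gl o (vb j)).length + ((gl (va j) o).length + 1) := rfl
    omega
  rw [hprod, hlen] at x2
  exact fib_of_fibW x2

end Transfer


section Analytic
variable {I : Type*} {A : I → I → Prop}

noncomputable def tailSeq (hext : ∀ i : I, ∃ j, A i j) (i : I) : ℕ → I
  | 0 => i
  | n+1 => Classical.choose (hext (tailSeq hext i n))

lemma tailSeq_spec (hext : ∀ i : I, ∃ j, A i j) (i : I) (n : ℕ) :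
    A (tailSeq hext i n) (tailSeq hext i (n+1)) :=
  Classical.choose_spec (hext (tailSeq hext i n))

lemma cylinder_nonempty (hext : ∀ i : I, ∃ j, A i j) (o : I) {l : List I}
    (hl : l.Chain' A) : ∃ ω : SFT A, ω ∈ cylinder A l := by
  classical
  set base : I := l.getLast?.getD o with hbase
  refine ⟨⟨fun n => if h : n < l.length then l.get ⟨n, h⟩
    else tailSeq hext base (n + 1 - l.length), ?_⟩, ?_⟩
  · intro n
    by_cases h1 : n + 1 < l.length
    · have h0 : n < l.length := by omega
      simp only [dif_pos h0, dif_pos h1]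
      exact List.isChain_iff_getElem.mp hl n (by omega)
    · by_cases h0 : n < l.length
      · have hlen : n + 1 = l.length := by omega
        have hne : l ≠ [] := by intro e; rw [e] at h0; simp at h0
        simp only [dif_pos h0, dif_neg h1]
        have e1 : n + 1 + 1 - l.length = 1 := by omega
        rw [e1]
        have e2 : l.get ⟨n, h0⟩ = base := by
          have hn' : n = l.length - 1 := by omega
          subst hn'
          rw [hbase, List.getLast?_eq_getLast hne, Option.getD_some,
            List.getLast_eq_getElem]
          simp [List.get_eq_getElem]
        rw [e2]
        exact tailSeq_spec hext base 0
      · simp only [dif_neg h0, dif_neg h1]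
        have e1 : n + 1 + 1 - l.length = (n + 1 - l.length) + 1 := by omega
        rw [e1]
        exact tailSeq_spec hext base _
  · intro i h
    simp only [dif_pos h]

lemma cylinder_anti {l r : List I} : cylinder A (l ++ r) ⊆ cylinder A l := by
  intro ω hω i hi
  have h2 : i < (l ++ r).length := by rw [List.length_append]; omega
  have := hω i h2
  rw [this]
  simp [List.get_eq_getElem, List.getElem_append_left hi]

variable {φ : SFT A → ℝ} {M : ℝ} {k : ℕ}

lemma shift_coord : ∀ (i : ℕ) (ω : SFT A) (j : ℕ), (SFT.shift^[i] ω).1 j = ω.1 (i + j) := by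
  intro i
  induction i with
  | zero => intro ω j; simp
  | succ i ih =>
    intro ω j
    rw [Function.iterate_succ_apply, ih]
    show ω.1 (i + j + 1) = ω.1 (i + 1 + j)
    have e : i + 1 + j = i + j + 1 := by omega
    rw [e]

lemma birkhoff_abs_le (hM : ∀ ω, |φ ω| ≤ M) (n : ℕ) (ω : SFT A) :
    |birkhoff φ n ω| ≤ n * M := by
  calc |birkhoff φ n ω| ≤ ∑ i ∈ Finset.range n, |φ (SFT.shift^[i] ω)| :=
        Finset.abs_sum_le_sum_abs _ _
    _ ≤ n * M := by
        have := Finset.sum_le_card_nsmul (Finset.range n)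
          (fun i => |φ (SFT.shift^[i] ω)|) M (fun x _ => hM _)
        simpa [nsmul_eq_mul] using this

lemma sword_le (hM : ∀ ω, |φ ω| ≤ M) (hM0 : 0 ≤ M) (l : List I) :
    Sword A φ l ≤ l.length * M := by
  apply Real.sSup_le
  · rintro x ⟨ω, _, rfl⟩
    exact (abs_le.mp (birkhoff_abs_le hM l.length ω)).2
  · positivity

lemma sword_bddAbove (hM : ∀ ω, |φ ω| ≤ M) (l : List I) :
    BddAbove ((fun τ => birkhoff φ l.length τ) '' cylinder A l) := by
  refine ⟨l.length * M, ?_⟩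
  rintro x ⟨ω, _, rfl⟩
  exact (abs_le.mp (birkhoff_abs_le hM l.length ω)).2

lemma sword_ge (hext : ∀ i : I, ∃ j, A i j) (o : I) (hM : ∀ ω, |φ ω| ≤ M)
    {l : List I} (hl : l.Chain' A) :
    -(l.length * M) ≤ Sword A φ l := by
  obtain ⟨ω, hω⟩ := cylinder_nonempty hext o hl
  have h1 : -(l.length * M) ≤ birkhoff φ l.length ω :=
    (abs_le.mp (birkhoff_abs_le hM l.length ω)).1
  exact h1.trans (le_csSup (sword_bddAbove hM l) ⟨ω, hω, rfl⟩)

lemma sword_append (hext : ∀ i : I, ∃ j, A i j) (o : I)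
    (hM : ∀ ω, |φ ω| ≤ M) (hM0 : 0 ≤ M)
    (hk : ∀ ω τ : SFT A, (∀ i < k, ω.1 i = τ.1 i) → φ ω = φ τ)
    {l r : List I} (h : (l ++ r).Chain' A) :
    Sword A φ l - 2 * k * M - r.length * M ≤ Sword A φ (l ++ r) := by
  classical
  obtain ⟨τ, hτ⟩ := cylinder_nonempty hext o h
  have hτl : τ ∈ cylinder A l := cylinder_anti hτ
  -- Step 2 : Sword l ≤ birkhoff over τ + 2kM
  have hstep2 : Sword A φ l ≤ birkhoff φ l.length τ + 2 * k * M := by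
    refine csSup_le ⟨birkhoff φ l.length τ, τ, hτl, rfl⟩ ?_
    rintro x ⟨τ', hτ', rfl⟩
    have hterm : ∀ i ∈ Finset.range l.length,
        φ (SFT.shift^[i] τ') ≤ φ (SFT.shift^[i] τ)
          + (if i + k ≤ l.length then 0 else 2 * M) := by
      intro i hi
      rw [Finset.mem_range] at hi
      by_cases hik : i + k ≤ l.length
      · have heq : φ (SFT.shift^[i] τ') = φ (SFT.shift^[i] τ) := by
          apply hk
          intro j hj
          rw [shift_coord, shift_coord]
          have hij : i + j < l.length := by omega
          have e1 : τ'.1 (i+j) = l.get ⟨i+j, hij⟩ := hτ' _ hij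
          have e2 : τ.1 (i+j) = l.get ⟨i+j, hij⟩ := hτl _ hij
          rw [e1, e2]
        simp [heq, hik]
      · have h1 := abs_le.mp (hM (SFT.shift^[i] τ'))
        have h2 := abs_le.mp (hM (SFT.shift^[i] τ))
        simp only [if_neg hik]
        linarith
    have hsum := Finset.sum_le_sum hterm
    rw [Finset.sum_add_distrib] at hsum
    have hite : ∑ i ∈ Finset.range l.length,
        (if i + k ≤ l.length then (0:ℝ) else 2 * M) ≤ 2 * k * M := by
      have e1 : ∀ i, (if i + k ≤ l.length then (0:ℝ) else 2 * M)
          = (if ¬ (i + k ≤ l.length) then 2 * M else 0) := by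
        intro i; by_cases hc : i + k ≤ l.length <;> simp [hc]
      simp only [e1]
      rw [← Finset.sum_filter]
      have hsub : (Finset.range l.length).filter (fun i => ¬ (i + k ≤ l.length))
          ⊆ Finset.Ico (l.length - k) l.length := by
        intro i hi
        simp only [Finset.mem_filter, Finset.mem_range] at hi
        simp only [Finset.mem_Ico]
        omega
      calc ∑ _i ∈ (Finset.range l.length).filter (fun i => ¬ (i + k ≤ l.length)), 2 * M
          ≤ ∑ _i ∈ Finset.Ico (l.length - k) l.length, 2 * M := by
            apply Finset.sum_le_sum_of_subset_of_nonneg hsub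
            intro i _ _; positivity
        _ = ((l.length - (l.length - k) : ℕ) : ℝ) * (2 * M) := by
            rw [Finset.sum_const, Nat.card_Ico, nsmul_eq_mul]
        _ ≤ (k : ℝ) * (2 * M) := by
            have hcard : ((l.length - (l.length - k) : ℕ) : ℝ) ≤ (k : ℝ) := by
              exact_mod_cast (by omega : l.length - (l.length - k) ≤ k)
            nlinarith [hcard, hM0]
        _ = 2 * k * M := by ring
    calc birkhoff φ l.length τ' ≤ birkhoff φ l.length τ + ∑ i ∈ Finset.range l.length,
          (if i + k ≤ l.length then (0:ℝ) else 2 * M) := hsum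
      _ ≤ birkhoff φ l.length τ + 2 * k * M := by linarith
  -- Step 1 : birkhoff over full word ≥ birkhoff over l - r.length * M
  have hstep1 : birkhoff φ l.length τ - r.length * M ≤ birkhoff φ (l ++ r).length τ := by
    have e : (l ++ r).length = l.length + r.length := by simp
    rw [e]
    unfold birkhoff
    rw [Finset.sum_range_add]
    have : -((r.length : ℝ) * M) ≤ ∑ i ∈ Finset.range r.length,
        φ (SFT.shift^[l.length + i] τ) := by
      have h1 : ∀ i ∈ Finset.range r.length, -M ≤ φ (SFT.shift^[l.length + i] τ) :=
        fun i _ => (abs_le.mp (hM _)).1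
      calc -((r.length : ℝ) * M) = ∑ _i ∈ Finset.range r.length, (-M) := by
            rw [Finset.sum_const, Finset.card_range, nsmul_eq_mul]; ring
        _ ≤ _ := Finset.sum_le_sum h1
    linarith
  -- Step 3
  have hstep3 : birkhoff φ (l ++ r).length τ ≤ Sword A φ (l ++ r) :=
    le_csSup (sword_bddAbove hM _) ⟨τ, hτ, rfl⟩
  linarith

end Analytic


section CS
variable {I : Type*} [Fintype I] {G : Type*} [Group G]
variable {A : I → I → Prop} {Ψ : I → G} {φ : SFT A → ℝ} {M : ℝ} {k : ℕ}

abbrev FibT (A : I → I → Prop) (Ψ : I → G) (g : G) (n : ℕ) :=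
  {l : List I // l.length = n ∧ l.Chain' A ∧ (l.map Ψ).prod = g}

lemma fibT_finite (g : G) (n : ℕ) : Finite (FibT A Ψ g n) := by
  have h1 : {l : List I | l.length = n}.Finite := List.finite_length_eq I n
  have h2 : {l : List I | l.length = n ∧ l.Chain' A ∧ (l.map Ψ).prod = g}.Finite :=
    h1.subset (fun l hl => hl.1)
  exact h2.to_subtype

lemma fib_summable (f : FibT A Ψ g n → ℝ) : Summable f := by
  haveI := fibT_finite (A := A) (Ψ := Ψ) g n
  exact Summable.of_finite

lemma cosetSum_nonneg (g : G) (n : ℕ) : 0 ≤ cosetSum A Ψ φ g n :=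
  tsum_nonneg (fun _ => (Real.exp_pos _).le)

lemma cosetSum_of_not_fib {g : G} {n : ℕ} (h : ¬ Fib A Ψ g n) :
    cosetSum A Ψ φ g n = 0 := by
  haveI : IsEmpty (FibT A Ψ g n) := ⟨fun l => h ⟨l.1, l.2⟩⟩
  exact tsum_empty

lemma cosetSum_pos {g : G} {n : ℕ} (h : Fib A Ψ g n) : 0 < cosetSum A Ψ φ g n := by
  obtain ⟨l, hl⟩ := h
  haveI := fibT_finite (A := A) (Ψ := Ψ) g n
  exact Summable.tsum_pos (fib_summable _) (fun _ => (Real.exp_pos _).le) ⟨l, hl⟩ (Real.exp_pos _)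

lemma cosetSum_ge_single {g : G} {n : ℕ} (l : FibT A Ψ g n) :
    Real.exp (Sword A φ (l : List I)) ≤ cosetSum A Ψ φ g n := by
  haveI := fibT_finite (A := A) (Ψ := Ψ) g n
  rw [cosetSum]
  exact Summable.le_tsum (fib_summable (fun x : FibT A Ψ g n => Real.exp (Sword A φ (x : List I))))
    l (fun _ _ => (Real.exp_pos _).le)

lemma cosetSum_le_bound (hM : ∀ ω, |φ ω| ≤ M) (hM0 : 0 ≤ M) (g : G) (n : ℕ) :
    cosetSum A Ψ φ g n ≤ (Fintype.card I : ℝ)^n * Real.exp (n * M) := by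
  classical
  haveI := fibT_finite (A := A) (Ψ := Ψ) g n
  haveI := Fintype.ofFinite (FibT A Ψ g n)
  rw [cosetSum, tsum_fintype]
  have hterm : ∀ l : FibT A Ψ g n, Real.exp (Sword A φ (l : List I)) ≤ Real.exp (n * M) := by
    intro l
    rw [Real.exp_le_exp]
    have h1 := sword_le (φ := φ) hM hM0 (l : List I)
    rwa [l.2.1] at h1
  have hcard : Fintype.card (FibT A Ψ g n) ≤ Fintype.card I ^ n := by
    have hinj : Function.Injective
        (fun (l : FibT A Ψ g n) (i : Fin n) => l.1.get ⟨i.1, by rw [l.2.1]; exact i.2⟩) := by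
      intro l l' h
      apply Subtype.ext
      apply List.ext_get (by rw [l.2.1, l'.2.1])
      intro i h1 h2
      have := congrFun h ⟨i, by rw [← l.2.1]; exact h1⟩
      simpa using this
    calc Fintype.card (FibT A Ψ g n) ≤ Fintype.card (Fin n → I) :=
          Fintype.card_le_of_injective _ hinj
      _ = Fintype.card I ^ n := by rw [Fintype.card_fun, Fintype.card_fin]
  calc ∑ l : FibT A Ψ g n, Real.exp (Sword A φ (l : List I))
      ≤ (Fintype.card (FibT A Ψ g n)) • Real.exp (n * M) :=
        Finset.sum_le_card_nsmul _ _ _ (fun x _ => hterm x)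
    _ = (Fintype.card (FibT A Ψ g n) : ℝ) * Real.exp (n * M) := by
        rw [nsmul_eq_mul]
    _ ≤ (Fintype.card I : ℝ)^n * Real.exp (n * M) := by
        have : ((Fintype.card (FibT A Ψ g n) : ℕ) : ℝ) ≤ ((Fintype.card I ^ n : ℕ) : ℝ) := by
          exact_mod_cast hcard
        push_cast at this
        nlinarith [Real.exp_pos ((n:ℝ) * M)]

lemma cosetSum_compare (hext : ∀ i : I, ∃ j, A i j) (o : I)
    (hM : ∀ ω, |φ ω| ≤ M) (hM0 : 0 ≤ M)
    (hk : ∀ ω τ : SFT A, (∀ i < k, ω.1 i = τ.1 i) → φ ω = φ τ)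
    (gl : I → I → List I)
    (hgl1 : ∀ a b, ((gl a b).map Ψ).prod = 1)
    (hgl2 : ∀ a b, (a :: (gl a b ++ [b])).Chain' A)
    {g g' : G} {T : List I} (hTne : T ≠ []) (hTc : T.Chain' A)
    (hTp : (T.map Ψ).prod = g⁻¹ * g') {D : ℕ}
    (hD : ∀ a : I, (gl a (T.head hTne)).length + T.length ≤ D)
    {n : ℕ} (hn : 1 ≤ n) :
    cosetSum A Ψ φ g n ≤ Real.exp (2*k*M + D*M) *
      ∑ t ∈ Finset.range D, cosetSum A Ψ φ g' (n + 1 + t) := by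
  classical
  haveI := fibT_finite (A := A) (Ψ := Ψ) g n
  haveI := Fintype.ofFinite (FibT A Ψ g n)
  haveI : ∀ t : Fin D, Fintype (FibT A Ψ g' (n + 1 + t)) := fun t => by
    haveI := fibT_finite (A := A) (Ψ := Ψ) g' (n + 1 + (t : ℕ))
    exact Fintype.ofFinite _
  set b0 : I := T.head hTne with hb0
  -- data attached to each fibre word
  have hlne : ∀ l : FibT A Ψ g n, l.1 ≠ [] := by
    intro l e
    have := l.2.1
    rw [e] at this
    simp at this
    omega
  set ρ : FibT A Ψ g n → List I := fun l => gl (l.1.getLast (hlne l)) b0 ++ T with hρ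
  have hρlen : ∀ l, 1 ≤ (ρ l).length ∧ (ρ l).length ≤ D := by
    intro l
    constructor
    · have hT1 : 1 ≤ T.length := List.length_pos_iff.mpr hTne
      rw [hρ]
      simp only [List.length_append]
      omega
    · rw [hρ]
      simpa using hD (l.1.getLast (hlne l))
  have hword : ∀ l : FibT A Ψ g n,
      (l.1 ++ ρ l).length = n + 1 + ((ρ l).length - 1)
      ∧ (l.1 ++ ρ l).Chain' A ∧ ((l.1 ++ ρ l).map Ψ).prod = g' := by
    intro l
    have h1 := (hρlen l).1
    refine ⟨by simp [l.2.1]; omega, ?_, ?_⟩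
    · rw [hρ, ← List.append_assoc]
      apply chain'_glue l.2.2.1 hTc (List.getLast?_eq_getLast (hlne l))
        (List.head?_eq_head hTne)
      exact hgl2 _ _
    · rw [List.map_append, List.prod_append, l.2.2.2, hρ, List.map_append,
        List.prod_append, hgl1, hTp]
      group
  set J : FibT A Ψ g n → Σ t : Fin D, FibT A Ψ g' (n + 1 + t) := fun l =>
    ⟨⟨(ρ l).length - 1, by have := hρlen l; omega⟩,
      ⟨l.1 ++ ρ l, (hword l).1, (hword l).2.1, (hword l).2.2⟩⟩ with hJ
  have hJinj : Function.Injective J := by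
    intro l l' h
    have h2 : (fun x : Σ t : Fin D, FibT A Ψ g' (n + 1 + t) => (x.2 : List I)) (J l)
        = (fun x : Σ t : Fin D, FibT A Ψ g' (n + 1 + t) => (x.2 : List I)) (J l') := by
      rw [h]
    simp only [hJ] at h2
    apply Subtype.ext
    exact List.append_inj_left h2 (by rw [l.2.1, l'.2.1])
  -- pointwise bound
  set F : (Σ t : Fin D, FibT A Ψ g' (n + 1 + t)) → ℝ := fun x =>
    Real.exp (Sword A φ (x.2 : List I)) with hF
  have hpt : ∀ l : FibT A Ψ g n,
      Real.exp (Sword A φ (l : List I)) ≤ Real.exp (2*k*M + D*M) * F (J l) := by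
    intro l
    rw [hF, ← Real.exp_add, Real.exp_le_exp]
    have h1 := sword_append (φ := φ) (k := k) hext o hM hM0 hk (hword l).2.1
    have h2 : (ρ l).length * M ≤ D * M := by
      have := (hρlen l).2
      have : ((ρ l).length : ℝ) ≤ (D : ℝ) := by exact_mod_cast this
      nlinarith
    show Sword A φ (l : List I) ≤ 2*k*M + D*M + Sword A φ (l.1 ++ ρ l)
    linarith
  calc cosetSum A Ψ φ g n = ∑ l : FibT A Ψ g n, Real.exp (Sword A φ (l : List I)) := by
        rw [cosetSum, tsum_fintype]
    _ ≤ ∑ l : FibT A Ψ g n, Real.exp (2*k*M + D*M) * F (J l) :=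
        Finset.sum_le_sum (fun l _ => hpt l)
    _ = Real.exp (2*k*M + D*M) * ∑ l : FibT A Ψ g n, F (J l) := by
        rw [Finset.mul_sum]
    _ ≤ Real.exp (2*k*M + D*M) * ∑ x : Σ t : Fin D, FibT A Ψ g' (n + 1 + t), F x := by
        have hle : ∑ l : FibT A Ψ g n, F (J l)
            ≤ ∑ x : Σ t : Fin D, FibT A Ψ g' (n + 1 + t), F x := by
          rw [← Finset.sum_image (g := J) (f := F)
            (fun x _ y _ h => hJinj h)]
          apply Finset.sum_le_sum_of_subset_of_nonneg (Finset.subset_univ _)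
          intro x _ _
          exact (Real.exp_pos _).le
        nlinarith [Real.exp_pos (2*k*M + D*M)]
    _ = Real.exp (2*k*M + D*M) * ∑ t ∈ Finset.range D, cosetSum A Ψ φ g' (n + 1 + t) := by
        congr 1
        rw [← Finset.univ_sigma_univ, Finset.sum_sigma]
        rw [← Fin.sum_univ_eq_sum_range (fun t => cosetSum A Ψ φ g' (n + 1 + t))]
        apply Finset.sum_congr rfl
        intro t _
        rw [cosetSum, tsum_fintype]

end CS


section End
open Filter
variable {I : Type*} [Fintype I] {G : Type*} [Group G]
variable {A : I → I → Prop} {Ψ : I → G} {φ : SFT A → ℝ} {M : ℝ}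

lemma u_abs_le (hext : ∀ i : I, ∃ j, A i j) (o : I) (hM : ∀ ω, |φ ω| ≤ M)
    (hM0 : 0 ≤ M) (g : G) (n : ℕ) :
    |(n : ℝ)⁻¹ * Real.log (cosetSum A Ψ φ g n)| ≤ Real.log (Fintype.card I) + M := by
  have hcard1 : (1:ℝ) ≤ (Fintype.card I : ℝ) := by
    have h := Fintype.card_pos_iff.mpr ⟨o⟩
    exact_mod_cast h
  have hB0 : 0 ≤ Real.log (Fintype.card I) + M := by
    have := Real.log_nonneg hcard1; linarith
  rcases Nat.eq_zero_or_pos n with rfl | hn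
  · simpa using hB0
  have hn0 : (0:ℝ) < (n:ℝ) := by exact_mod_cast hn
  by_cases hf : Fib A Ψ g n
  · have hpos := cosetSum_pos (φ := φ) hf
    have hup : Real.log (cosetSum A Ψ φ g n) ≤ (n:ℝ) * (Real.log (Fintype.card I) + M) := by
      have h1 := cosetSum_le_bound (Ψ := Ψ) (φ := φ) hM hM0 g n
      have h2 := Real.log_le_log hpos h1
      rw [Real.log_mul (by positivity) (Real.exp_ne_zero _), Real.log_pow,
        Real.log_exp] at h2
      push_cast at h2 ⊢
      linarith
    have hlow : -((n:ℝ) * (Real.log (Fintype.card I) + M))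
        ≤ Real.log (cosetSum A Ψ φ g n) := by
      obtain ⟨l, hl⟩ := hf
      have h1 := cosetSum_ge_single (φ := φ) (⟨l, hl⟩ : FibT A Ψ g n)
      have h2 : Real.exp (-((n:ℝ) * M)) ≤ cosetSum A Ψ φ g n := by
        refine le_trans ?_ h1
        rw [Real.exp_le_exp]
        have h3 := sword_ge (φ := φ) hext o hM hl.2.1
        rw [hl.1] at h3
        exact h3
      have h4 := (Real.le_log_iff_exp_le hpos).mpr h2
      have h5 : 0 ≤ (n:ℝ) * Real.log (Fintype.card I) := by
        have := Real.log_nonneg hcard1; positivity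
      nlinarith
    have habs : |Real.log (cosetSum A Ψ φ g n)|
        ≤ (n:ℝ) * (Real.log (Fintype.card I) + M) := abs_le.mpr ⟨by linarith, hup⟩
    calc |(n:ℝ)⁻¹ * Real.log (cosetSum A Ψ φ g n)|
        = (n:ℝ)⁻¹ * |Real.log (cosetSum A Ψ φ g n)| := by
          rw [abs_mul, abs_inv, abs_of_pos hn0]
      _ ≤ (n:ℝ)⁻¹ * ((n:ℝ) * (Real.log (Fintype.card I) + M)) :=
          mul_le_mul_of_nonneg_left habs (by positivity)
      _ = Real.log (Fintype.card I) + M := by field_simp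
  · rw [cosetSum_of_not_fib hf]
    simpa using hB0

set_option maxHeartbeats 1000000 in
lemma pressure_le (hext : ∀ i : I, ∃ j, A i j) (o : I)
    (hsurj : ∀ g : G, ∃ l : List I, l.Chain' A ∧ (l.map Ψ).prod = g)
    (gl : I → I → List I)
    (hgl1 : ∀ a b, ((gl a b).map Ψ).prod = 1)
    (hgl2 : ∀ a b, (a :: (gl a b ++ [b])).Chain' A)
    (hM : ∀ ω, |φ ω| ≤ M) (hM0 : 0 ≤ M) {k : ℕ}
    (hk : ∀ ω τ : SFT A, (∀ i < k, ω.1 i = τ.1 i) → φ ω = φ τ)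
    (g g' : G) (hgg : g ≠ g') :
    cosetPressure A Ψ φ g ≤ cosetPressure A Ψ φ g' := by
  classical
  set B₀ : ℝ := Real.log (Fintype.card I) + M with hB₀def
  have hcard1 : (1:ℝ) ≤ (Fintype.card I : ℝ) := by
    have h := Fintype.card_pos_iff.mpr ⟨o⟩
    exact_mod_cast h
  have hB₀ : 0 ≤ B₀ := by
    have := Real.log_nonneg hcard1; rw [hB₀def]; linarith
  set u : ℕ → ℝ := fun n => (n : ℝ)⁻¹ * Real.log (cosetSum A Ψ φ g n) with hu_def
  set u' : ℕ → ℝ := fun n => (n : ℝ)⁻¹ * Real.log (cosetSum A Ψ φ g' n) with hu'_def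
  have hu : ∀ n, |u n| ≤ B₀ := fun n => u_abs_le hext o hM hM0 g n
  have hu' : ∀ n, |u' n| ≤ B₀ := fun n => u_abs_le hext o hM hM0 g' n
  have hbu' : IsBoundedUnder (· ≤ ·) atTop u' :=
    ⟨B₀, Filter.eventually_map.mpr (Eventually.of_forall fun n => (abs_le.mp (hu' n)).2)⟩
  have hcobu : IsCoboundedUnder (· ≤ ·) atTop u :=
    isCoboundedUnder_le_of_eventually_le atTop
      (Eventually.of_forall fun n => (abs_le.mp (hu n)).1)
  obtain ⟨T, hTc, hTp⟩ := hsurj (g⁻¹ * g')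
  have hTne : T ≠ [] := by
    intro e
    rw [e] at hTp
    simp at hTp
    exact hgg (inv_mul_eq_one.mp hTp.symm)
  set D : ℕ := (Finset.univ.sup fun a : I => (gl a (T.head hTne)).length) + T.length
    with hDdef
  have hD : ∀ a : I, (gl a (T.head hTne)).length + T.length ≤ D := by
    intro a
    rw [hDdef]
    exact Nat.add_le_add_right (Finset.le_sup (f := fun a : I => (gl a (T.head hTne)).length) (Finset.mem_univ a)) _
  have hTlen : 1 ≤ T.length := List.length_pos_iff.mpr hTne
  have hD1 : 1 ≤ D := by rw [hDdef]; omega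
  have hD1' : (1:ℝ) ≤ (D:ℝ) := by exact_mod_cast hD1
  set E : ℝ := 2*(k:ℝ)*M + (D:ℝ)*M with hEdef
  have hE0 : 0 ≤ E := by rw [hEdef]; positivity
  set L : ℝ := Real.log D with hLdef
  have hL0 : 0 ≤ L := by rw [hLdef]; exact Real.log_nonneg hD1'
  set C₁ : ℝ := B₀ * ((D:ℝ)+1) + E + L with hC₁def
  have hC₁ : 0 ≤ C₁ := by rw [hC₁def]; positivity
  have key : ∀ n : ℕ, 1 ≤ n → Fib A Ψ g n →
      ∃ m : ℕ, n ≤ m ∧ u n ≤ u' m + C₁ / n := by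
    intro n hn hf
    have hn0 : (0:ℝ) < (n:ℝ) := by exact_mod_cast hn
    have hcmp := cosetSum_compare (φ := φ) hext o hM hM0 hk gl hgl1 hgl2
      hTne hTc hTp hD hn
    rw [← hEdef] at hcmp
    have hSpos := cosetSum_pos (φ := φ) hf
    have hex : ∃ t ∈ Finset.range D,
        cosetSum A Ψ φ g n / ((D:ℝ) * Real.exp E) ≤ cosetSum A Ψ φ g' (n+1+t) := by
      by_contra hcon
      push_neg at hcon
      have hlt : ∑ t ∈ Finset.range D, cosetSum A Ψ φ g' (n + 1 + t)
          < ∑ _t ∈ Finset.range D, cosetSum A Ψ φ g n / ((D:ℝ) * Real.exp E) :=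
        Finset.sum_lt_sum_of_nonempty (by rw [Finset.nonempty_range_iff]; omega)
          (fun t ht => hcon t ht)
      rw [Finset.sum_const, Finset.card_range, nsmul_eq_mul] at hlt
      have he : (D:ℝ) * (cosetSum A Ψ φ g n / ((D:ℝ) * Real.exp E))
          = cosetSum A Ψ φ g n / Real.exp E := by
        field_simp
      rw [he] at hlt
      have hcontr : cosetSum A Ψ φ g n < cosetSum A Ψ φ g n := by
        calc cosetSum A Ψ φ g n
            ≤ Real.exp E * ∑ t ∈ Finset.range D, cosetSum A Ψ φ g' (n + 1 + t) := hcmp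
          _ < Real.exp E * (cosetSum A Ψ φ g n / Real.exp E) :=
              mul_lt_mul_of_pos_left hlt (Real.exp_pos E)
          _ = cosetSum A Ψ φ g n := by field_simp
      exact lt_irrefl _ hcontr
    obtain ⟨t, ht, hst⟩ := hex
    rw [Finset.mem_range] at ht
    refine ⟨n + 1 + t, by omega, ?_⟩
    have hm0 : (0:ℝ) < ((n+1+t : ℕ):ℝ) := by
      have : 0 < n + 1 + t := by omega
      exact_mod_cast this
    have hS'pos : 0 < cosetSum A Ψ φ g' (n+1+t) :=
      lt_of_lt_of_le (by positivity) hst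
    set x : ℝ := Real.log (cosetSum A Ψ φ g n) with hx
    set y : ℝ := Real.log (cosetSum A Ψ φ g' (n+1+t)) with hy
    have hxy : x - E - L ≤ y := by
      have h1 := Real.log_le_log (by positivity) hst
      rw [Real.log_div hSpos.ne' (by positivity), Real.log_mul (by positivity)
        (Real.exp_ne_zero _), Real.log_exp, ← hLdef] at h1
      rw [hx, hy]
      linarith
    have hx1 : x ≤ (n:ℝ) * B₀ := by
      have h := (abs_le.mp (hu n)).2
      have h2 : (n:ℝ)⁻¹ * x ≤ B₀ := h
      calc x = (n:ℝ) * ((n:ℝ)⁻¹ * x) := by field_simp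
        _ ≤ (n:ℝ) * B₀ := mul_le_mul_of_nonneg_left h2 hn0.le
    have hx2 : -((n:ℝ) * B₀) ≤ x := by
      have h := (abs_le.mp (hu n)).1
      have h2 : -B₀ ≤ (n:ℝ)⁻¹ * x := h
      have h3 : (n:ℝ) * (-B₀) ≤ (n:ℝ) * ((n:ℝ)⁻¹ * x) :=
        mul_le_mul_of_nonneg_left h2 hn0.le
      calc -((n:ℝ) * B₀) = (n:ℝ) * (-B₀) := by ring
        _ ≤ (n:ℝ) * ((n:ℝ)⁻¹ * x) := h3
        _ = x := by field_simp
    have hnm : (n:ℝ) ≤ ((n+1+t : ℕ):ℝ) := by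
      have : n ≤ n + 1 + t := by omega
      exact_mod_cast this
    have hmD : ((n+1+t : ℕ):ℝ) ≤ (n:ℝ) + ((D:ℝ)+1) := by
      have : (n + 1 + t : ℕ) ≤ n + (D + 1) := by omega
      calc ((n+1+t : ℕ):ℝ) ≤ ((n + (D+1) : ℕ):ℝ) := by exact_mod_cast this
        _ = (n:ℝ) + ((D:ℝ)+1) := by push_cast; ring
    have key2 : (x - C₁) * ((n+1+t : ℕ):ℝ) ≤ y * (n:ℝ) := by
      rw [hC₁def]
      have h1 : x * (((n+1+t : ℕ):ℝ) - (n:ℝ)) ≤ ((n:ℝ) * B₀) * (((n+1+t : ℕ):ℝ) - (n:ℝ)) :=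
        mul_le_mul_of_nonneg_right hx1 (by linarith)
      have h2 : ((n:ℝ) * B₀) * (((n+1+t : ℕ):ℝ) - (n:ℝ)) ≤ ((n:ℝ) * B₀) * ((D:ℝ)+1) :=
        mul_le_mul_of_nonneg_left (by linarith) (by positivity)
      have h4 : (x - E - L) * (n:ℝ) ≤ y * (n:ℝ) :=
        mul_le_mul_of_nonneg_right hxy hn0.le
      have h6 : 0 ≤ (B₀ * ((D:ℝ)+1) + E + L) * (((n+1+t : ℕ):ℝ) - (n:ℝ)) :=
        mul_nonneg (by positivity) (by linarith)
      nlinarith [h1, h2, h4, h6]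
    have hdiv : (x - C₁) / (n:ℝ) ≤ y / ((n+1+t : ℕ):ℝ) :=
      (div_le_div_iff₀ hn0 hm0).mpr key2
    have hun : u n = x / (n:ℝ) := by rw [hu_def, hx]; simp [inv_mul_eq_div]
    have hum : u' (n+1+t) = y / ((n+1+t : ℕ):ℝ) := by
      rw [hu'_def, hy]; simp [inv_mul_eq_div]
    rw [hun, hum]
    have hsd := sub_div x C₁ (n:ℝ)
    have hCd : C₁ / (n:ℝ) = C₁ / (n:ℝ) := rfl
    linarith [hdiv, hsd]
  -- limsup comparison
  have hPg : cosetPressure A Ψ φ g = limsup u atTop := rfl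
  have hPg' : cosetPressure A Ψ φ g' = limsup u' atTop := rfl
  rw [hPg, hPg']
  apply le_of_forall_pos_le_add
  intro ε hε
  have hlt : limsup u' atTop < limsup u' atTop + ε/2 :=
    lt_add_of_pos_right _ (by linarith)
  have hev' := eventually_lt_of_limsup_lt hlt hbu'
  obtain ⟨M₀, hM₀⟩ := eventually_atTop.mp hev'
  obtain ⟨N₄, hN₄⟩ := exists_nat_ge (2 * C₁ / ε)
  have hmain : ∀ n : ℕ, 1 ≤ n → M₀ ≤ n → N₄ ≤ n → Fib A Ψ g n →
      u n ≤ limsup u' atTop + ε := by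
    intro n h1 h2 h3 hf
    have hn0 : (0:ℝ) < (n:ℝ) := by exact_mod_cast h1
    obtain ⟨m, hm, hkey⟩ := key n h1 hf
    have hu'm : u' m < limsup u' atTop + ε/2 := hM₀ m (by omega)
    have hC : C₁ / n ≤ ε / 2 := by
      have hna : 2*C₁/ε ≤ (n:ℝ) := le_trans hN₄ (by exact_mod_cast h3)
      rw [div_le_iff₀ hε] at hna
      rw [div_le_iff₀ hn0]
      linarith
    linarith
  by_cases hZ : ∀ N₁ : ℕ, ∃ n, N₁ ≤ n ∧ ¬ Fib A Ψ g n
  · have hZ' : ∀ N₁ : ℕ, ∃ m, N₁ ≤ m ∧ ¬ Fib A Ψ g' m := by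
      intro N₁
      by_contra hcon
      push_neg at hcon
      obtain ⟨N₂, hN₂⟩ := fib_transfer (o := o) gl hgl1 hgl2 hsurj g' g
        (max N₁ 1) (by omega) (fun n hn => hcon n (by omega))
      obtain ⟨n, hn1, hn2⟩ := hZ N₂
      exact hn2 (hN₂ n hn1)
    have hP'0 : 0 ≤ limsup u' atTop := by
      apply le_limsup_of_frequently_le ?_ hbu'
      rw [frequently_atTop]
      intro a
      obtain ⟨m, hm1, hm2⟩ := hZ' a
      refine ⟨m, hm1, ?_⟩
      have : u' m = 0 := by
        rw [hu'_def]
        simp [cosetSum_of_not_fib (φ := φ) hm2]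
      rw [this]
    apply limsup_le_of_le hcobu
    rw [eventually_atTop]
    refine ⟨max (max M₀ N₄) 1, fun n hn => ?_⟩
    by_cases hf : Fib A Ψ g n
    · exact hmain n (by omega) (by omega) (by omega) hf
    · have h0 : u n = 0 := by
        rw [hu_def]
        simp [cosetSum_of_not_fib (φ := φ) hf]
      rw [h0]
      linarith
  · push_neg at hZ
    obtain ⟨N₁, hN₁⟩ := hZ
    apply limsup_le_of_le hcobu
    rw [eventually_atTop]
    refine ⟨max (max M₀ N₄) (max N₁ 1), fun n hn => ?_⟩
    exact hmain n (by omega) (by omega) (by omega) (hN₁ n (by omega))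

end End


/-- For a Markov shift over a finite alphabet, a countable group `G`, a semigroup homomorphism
`Ψ` with `Ψ(Σ*) = G` and the connectability property, and a bounded potential `φ` depending on
finitely many coordinates, the pressure `P(φ, Ψ⁻¹{g} ∩ Σ*)` does not depend on `g ∈ G`. -/

theorem stmt16 {I : Type*} [Fintype I] (A : I → I → Prop)
    {G : Type*} [Group G] [Countable G] (Ψ : I → G)
    (hext : ∀ i : I, ∃ j : I, A i j)
    (hsurj : ∀ g : G, ∃ l : List I, l.Chain' A ∧ (l.map Ψ).prod = g)
    (hconn : ∀ a b : I, ∃ γ : List I, (γ.map Ψ).prod = 1 ∧ List.Chain' A (a :: (γ ++ [b])))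
    (φ : SFT A → ℝ) (hbdd : ∃ M : ℝ, ∀ ω : SFT A, |φ ω| ≤ M)
    (hfin : ∃ k : ℕ, ∀ ω τ : SFT A, (∀ i < k, ω.1 i = τ.1 i) → φ ω = φ τ) :
    ∀ g g' : G, cosetPressure A Ψ φ g = cosetPressure A Ψ φ g' := by
  classical
  cases isEmpty_or_nonempty I with
  | inl hI =>
    have hg1 : ∀ h : G, h = 1 := by
      intro h
      obtain ⟨l, _, hp⟩ := hsurj h
      cases l with
      | nil => simpa using hp.symm
      | cons x t => exact (hI.false x).elim
    intro g g'
    rw [hg1 g, hg1 g']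
  | inr hI =>
    obtain ⟨o⟩ := hI
    choose gl hgl1 hgl2 using hconn
    obtain ⟨M₀, hM₀⟩ := hbdd
    have hM : ∀ ω, |φ ω| ≤ max M₀ 0 := fun ω => le_trans (hM₀ ω) (le_max_left _ _)
    have hM0 : (0:ℝ) ≤ max M₀ 0 := le_max_right _ _
    obtain ⟨k, hk⟩ := hfin
    intro g g'
    rcases eq_or_ne g g' with rfl | hne
    · rfl
    · exact le_antisymm
        (pressure_le hext o hsurj gl hgl1 hgl2 hM hM0 hk g g' hne)
        (pressure_le hext o hsurj gl hgl1 hgl2 hM hM0 hk g' g hne.symm)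
end
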